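/- arXiv:2406.18318 — 5 statements merged into one kernel-verified Lean document; each statement's English description precedes it below -/
import Mathlib

section
/- Let H be the Hermitian adjacency matrix of a mixed graph on a finite nonempty vertex type V, let d(v) be the degree of v (the number of vertices u with H v u ≠ 0), and let Δ = max over v of d(v). Then Real.sqrt Δ ≤ ρ(H) and ρ(H) ≤ Δ. -/
open Polynomial Filter

/-- A matrix `H` is the Hermitian adjacency matrix of a mixed graph: zero diagonal,
entries in `{0, 1, i, -i}`, and Hermitian. -/
def IsMixedAdj {V : Type*} (H : Matrix V V ℂ) : Prop :=
  (∀ v, H v v = 0) ∧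
  (∀ u v, H u v = 0 ∨ H u v = 1 ∨ H u v = Complex.I ∨ H u v = -Complex.I) ∧
  (∀ u v, H u v = star (H v u))

/-- The spectral radius of a matrix: the maximum of `|λ|` over its eigenvalues. -/
noncomputable def specRad {V : Type*} [Fintype V] [DecidableEq V] (H : Matrix V V ℂ) : ℝ :=
  sSup ((fun z => ‖z‖) '' spectrum ℂ H)

/-- The largest (real) eigenvalue of a Hermitian matrix. -/
noncomputable def lam1 {V : Type*} [Fintype V] [DecidableEq V] (H : Matrix V V ℂ) : ℝ :=
  sSup {x : ℝ | (x : ℂ) ∈ spectrum ℂ H}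

/-- The underlying simple graph of a mixed graph: `u ∼ v` iff `H u v ≠ 0`. -/
def underGraph {V : Type*} (H : Matrix V V ℂ) : SimpleGraph V :=
  SimpleGraph.fromRel fun u v => H u v ≠ 0

/-- The diameter of a finite simple graph. -/
noncomputable def gdiam {V : Type*} [Fintype V] (G : SimpleGraph V) : ℕ :=
  Finset.univ.sup fun p : V × V => G.dist p.1 p.2

/-- Degree of a vertex in a mixed graph. -/
noncomputable def mdeg {V : Type*} (H : Matrix V V ℂ) (v : V) : ℕ :=
  Nat.card {u // H v u ≠ 0}

/-- Maximum degree of a mixed graph. -/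
noncomputable def maxDeg {V : Type*} [Fintype V] (H : Matrix V V ℂ) : ℕ :=
  Finset.univ.sup (mdeg H)

/-- Adjacency matrix (over ℂ) of the path graph on `m` vertices. -/
def pathAdj (m : ℕ) : Matrix (Fin m) (Fin m) ℂ :=
  Matrix.of fun i j => if (i : ℕ) + 1 = (j : ℕ) ∨ (j : ℕ) + 1 = (i : ℕ) then 1 else 0

/-- `p_m`: characteristic polynomial of the path on `m` vertices (`p_0 = 1`). -/
noncomputable def pPoly (m : ℕ) : Polynomial ℂ := (pathAdj m).charpoly

/-- Build a Hermitian matrix on `Fin n` from a generator of "upper" entries. -/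
noncomputable def mkHerm (n : ℕ) (g : ℕ → ℕ → ℂ) : Matrix (Fin n) (Fin n) ℂ :=
  Matrix.of fun i j => g (i : ℕ) (j : ℕ) + star (g (j : ℕ) (i : ℕ))

/-- `C'_{n-1,n}`: imaginary `(n-1)`-cycle on `0,…,n-2` with a pendant vertex `n-1` at `0`. -/
noncomputable def CpPend (n : ℕ) : Matrix (Fin n) (Fin n) ℂ :=
  mkHerm n fun a b =>
    if a + 1 = b ∧ b ≤ n - 2 then 1
    else if a = n - 2 ∧ b = 0 then Complex.I
    else if a = 0 ∧ b = n - 1 then 1 else 0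

/-- `C'_{3,n}`: imaginary triangle on `0,1,2` with an undirected path `0,3,4,…,n-1`. -/
noncomputable def Cp3 (n : ℕ) : Matrix (Fin n) (Fin n) ℂ :=
  mkHerm n fun a b =>
    if (a = 0 ∧ b = 1) ∨ (a = 1 ∧ b = 2) ∨ (a = 0 ∧ b = 3) then 1
    else if a = 2 ∧ b = 0 then Complex.I
    else if 3 ≤ a ∧ a + 1 = b then 1 else 0

/-- `C'_{k,k+2}`: imaginary `k`-cycle on `0,…,k-1` with a pendant path `0,k,k+1`. -/
noncomputable def CpTail (k : ℕ) : Matrix (Fin (k + 2)) (Fin (k + 2)) ℂ :=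
  mkHerm (k + 2) fun a b =>
    if a + 1 = b ∧ b ≤ k - 1 then 1
    else if a = k - 1 ∧ b = 0 then Complex.I
    else if a = 0 ∧ b = k then 1
    else if a = k ∧ b = k + 1 then 1 else 0

/-- `D_{k,t}`: imaginary `k`-cycle with pendant vertices `k` at `0` and `k+1` at `t`. -/
noncomputable def Dkt (k t : ℕ) : Matrix (Fin (k + 2)) (Fin (k + 2)) ℂ :=
  mkHerm (k + 2) fun a b =>
    if a + 1 = b ∧ b ≤ k - 1 then 1
    else if a = k - 1 ∧ b = 0 then Complex.I
    else if a = 0 ∧ b = k then 1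
    else if a = t ∧ b = k + 1 then 1 else 0

/-- `C'_n`: the imaginary `n`-cycle on `ZMod n`. -/
noncomputable def CpCycle (n : ℕ) [NeZero n] : Matrix (ZMod n) (ZMod n) ℂ :=
  Matrix.of fun j l =>
    (if l = j + 1 then (if j = -1 then Complex.I else 1) else 0)
    + (if j = l + 1 then (if l = -1 then -Complex.I else 1) else 0)

/-- `C_n`: the undirected `n`-cycle. -/
noncomputable def Cund (n : ℕ) : Matrix (Fin n) (Fin n) ℂ :=
  mkHerm n fun a b => if a + 1 = b ∨ (a = n - 1 ∧ b = 0) then 1 else 0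

/-- `C''_n`: the negative `n`-cycle. -/
noncomputable def Cneg (n : ℕ) : Matrix (Fin n) (Fin n) ℂ :=
  mkHerm n fun a b =>
    if a + 1 = b ∧ b ≤ n - 2 then 1
    else if a = n - 2 ∧ b = n - 1 then Complex.I
    else if a = n - 1 ∧ b = 0 then Complex.I else 0

/-- `G''_{n-2,n/2}`: negative `(n-2)`-cycle with pendant edges at `v₁` and `v_{n/2}`. -/
noncomputable def Gpp (n : ℕ) : Matrix (Fin n) (Fin n) ℂ :=
  mkHerm n fun a b =>
    if a + 1 = b ∧ b ≤ n - 4 then 1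
    else if a = n - 4 ∧ b = n - 3 then Complex.I
    else if a = n - 3 ∧ b = 0 then Complex.I
    else if a = 0 ∧ b = n - 2 then 1
    else if a = n / 2 - 1 ∧ b = n - 1 then 1 else 0

/-- `U''_{k,m}`: negative `6`-cycle with pendant paths of `k` vertices at `v₁`
and `m` vertices at `v₄`. -/
noncomputable def Upp (k m : ℕ) : Matrix (Fin (6 + k + m)) (Fin (6 + k + m)) ℂ :=
  mkHerm (6 + k + m) fun a b =>
    if a + 1 = b ∧ b ≤ 4 then 1
    else if a = 4 ∧ b = 5 then Complex.I
    else if a = 5 ∧ b = 0 then Complex.I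
    else if a = 0 ∧ b = 6 ∧ 1 ≤ k then 1
    else if 6 ≤ a ∧ a + 1 = b ∧ b ≤ 5 + k then 1
    else if a = 3 ∧ b = 6 + k ∧ 1 ≤ m then 1
    else if 6 + k ≤ a ∧ a + 1 = b ∧ b ≤ 5 + k + m then 1 else 0

/-- `G''_{8,4}`: negative `8`-cycle with pendant edges at `v₁` and `v₄`. -/
noncomputable def Gpp84 : Matrix (Fin 10) (Fin 10) ℂ :=
  mkHerm 10 fun a b =>
    if a + 1 = b ∧ b ≤ 6 then 1
    else if a = 6 ∧ b = 7 then Complex.I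
    else if a = 7 ∧ b = 0 then Complex.I
    else if (a = 0 ∧ b = 8) ∨ (a = 3 ∧ b = 9) then 1 else 0

/-- `G''_{10,5}`: negative `10`-cycle with pendant edges at `v₁` and `v₅`. -/
noncomputable def Gpp105 : Matrix (Fin 12) (Fin 12) ℂ :=
  mkHerm 12 fun a b =>
    if a + 1 = b ∧ b ≤ 8 then 1
    else if a = 8 ∧ b = 9 then Complex.I
    else if a = 9 ∧ b = 0 then Complex.I
    else if (a = 0 ∧ b = 10) ∨ (a = 4 ∧ b = 11) then 1 else 0

/-- `U''_6`: negative `6`-cycle with a pendant path of 2 vertices at `v₁`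
and pendant edges at `v₃`, `v₅`. -/
noncomputable def Upp6 : Matrix (Fin 10) (Fin 10) ℂ :=
  mkHerm 10 fun a b =>
    if a + 1 = b ∧ b ≤ 4 then 1
    else if a = 4 ∧ b = 5 then Complex.I
    else if a = 5 ∧ b = 0 then Complex.I
    else if (a = 0 ∧ b = 6) ∨ (a = 6 ∧ b = 7) ∨ (a = 2 ∧ b = 8) ∨ (a = 4 ∧ b = 9) then 1 else 0

/-- `U''_8`: negative `8`-cycle with pendant paths of 2 vertices at `v₁` and `v₅`. -/
noncomputable def Upp8 : Matrix (Fin 12) (Fin 12) ℂ :=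
  mkHerm 12 fun a b =>
    if a + 1 = b ∧ b ≤ 6 then 1
    else if a = 6 ∧ b = 7 then Complex.I
    else if a = 7 ∧ b = 0 then Complex.I
    else if (a = 0 ∧ b = 8) ∨ (a = 8 ∧ b = 9) ∨ (a = 4 ∧ b = 10) ∨ (a = 10 ∧ b = 11) then 1
    else 0

/-- Two mixed graphs are switching isomorphic. -/
def IsSwitchIso {V₁ V₂ : Type*} (H₁ : Matrix V₁ V₁ ℂ) (H₂ : Matrix V₂ V₂ ℂ) : Prop :=
  ∃ (σ : V₁ ≃ V₂) (d : V₁ → ℂ),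
    (∀ v, d v = 1 ∨ d v = -1 ∨ d v = Complex.I ∨ d v = -Complex.I) ∧
    ((∀ u v, H₂ (σ u) (σ v) = (d u)⁻¹ * H₁ u v * d v) ∨
     (∀ u v, H₂ (σ u) (σ v) = (d u)⁻¹ * star (H₁ u v) * d v))

/-- `M` is switching isomorphic to an induced subgraph (principal submatrix) of `H`. -/
def IsSwitchSub {V U : Type*} (M : Matrix V V ℂ) (H : Matrix U U ℂ) : Prop :=
  ∃ f : V → U, Function.Injective f ∧ IsSwitchIso M (H.submatrix f f)

/-- `x` is the largest positive real root of `p`. -/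
def IsMaxPosRoot (p : Polynomial ℝ) (x : ℝ) : Prop :=
  0 < x ∧ p.eval x = 0 ∧ ∀ y : ℝ, 0 < y → p.eval y = 0 → y ≤ x

/-- The mixed graph obtained from `H` by attaching a pendant path of `n` new
vertices at `v`. -/
noncomputable def attachPath {V : Type*} [DecidableEq V] (H : Matrix V V ℂ) (v : V) (n : ℕ) :
    Matrix (V ⊕ Fin n) (V ⊕ Fin n) ℂ :=
  Matrix.of fun a b =>
    match a, b with
    | Sum.inl u, Sum.inl w => H u w
    | Sum.inl u, Sum.inr i => if u = v ∧ (i : ℕ) = 0 then 1 else 0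
    | Sum.inr i, Sum.inl u => if u = v ∧ (i : ℕ) = 0 then 1 else 0
    | Sum.inr i, Sum.inr j => if (i : ℕ) + 1 = (j : ℕ) ∨ (j : ℕ) + 1 = (i : ℕ) then 1 else 0

/-- Diagonal entries of a Hermitian matrix are bounded by a bound on eigenvalues. -/
lemma diag_le_of_eig_le' {V : Type*} [Fintype V] [DecidableEq V]
    {A : Matrix V V ℂ} (hA : A.IsHermitian) {c : ℝ}
    (hc : ∀ i, |hA.eigenvalues i| ≤ c) (v : V) : (A v v).re ≤ c := by
  classical
  set U : Matrix V V ℂ := (hA.eigenvectorUnitary : Matrix V V ℂ) with hU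
  have hrowC : ∑ k, (Complex.normSq (U v k) : ℂ) = 1 := by
    have h1 : U * star U = 1 := Matrix.mem_unitaryGroup_iff.mp hA.eigenvectorUnitary.2
    have := congrFun (congrFun h1 v) v
    simp only [Matrix.mul_apply, Matrix.star_apply, Matrix.one_apply_eq] at this
    simpa [Complex.mul_conj] using this
  have hrow : ∑ k, Complex.normSq (U v k) = 1 := by
    exact_mod_cast hrowC
  have hAvv : A v v = ∑ k, (hA.eigenvalues k : ℂ) * (Complex.normSq (U v k) : ℂ) := by
    conv_lhs => rw [hA.spectral_theorem, Unitary.conjStarAlgAut_apply]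
    rw [Matrix.mul_apply]
    refine Finset.sum_congr rfl fun k _ => ?_
    rw [Matrix.mul_diagonal, Matrix.star_apply]
    have h2 : U v k * star (U v k) = (Complex.normSq (U v k) : ℂ) := Complex.mul_conj _
    have h3 : (RCLike.ofReal ∘ hA.eigenvalues) k = ((hA.eigenvalues k : ℝ) : ℂ) := by
      simp [RCLike.ofReal_alg, Complex.coe_algebraMap]
    rw [h3, mul_comm (U v k), mul_assoc, h2]
  have hre : (A v v).re = ∑ k, hA.eigenvalues k * Complex.normSq (U v k) := by
    rw [hAvv, Complex.re_sum]
    refine Finset.sum_congr rfl fun k _ => ?_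
    simp [Complex.mul_re]
  rw [hre]
  calc ∑ k, hA.eigenvalues k * Complex.normSq (U v k)
      ≤ ∑ k, c * Complex.normSq (U v k) := by
        refine Finset.sum_le_sum fun k _ => ?_
        exact mul_le_mul_of_nonneg_right ((le_abs_self _).trans (hc k)) (Complex.normSq_nonneg _)
    _ = c := by rw [← Finset.mul_sum, hrow, mul_one]

/-- `√Δ ≤ ρ(H) ≤ Δ`. -/
theorem stmt0 {V : Type*} [Fintype V] [DecidableEq V] [Nonempty V]
    (H : Matrix V V ℂ) (hH : IsMixedAdj H) :
    Real.sqrt (maxDeg H : ℝ) ≤ specRad H ∧ specRad H ≤ (maxDeg H : ℝ) := by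
  classical
  obtain ⟨hdiag, hentry, hherm⟩ := hH
  have hHerm : H.IsHermitian := by
    ext i j
    rw [Matrix.conjTranspose_apply]
    exact (hherm i j).symm
  have hnsq : ∀ u w, H u w ≠ 0 → Complex.normSq (H u w) = 1 := by
    intro u w h
    rcases hentry u w with h1 | h1 | h1 | h1 <;> simp [h1] at h ⊢
  have habs : ∀ u w, ‖H u w‖ = if H u w ≠ 0 then 1 else 0 := by
    intro u w
    by_cases h : H u w = 0
    · simp [h]
    · simp only [h, if_pos, ne_eq, not_false_eq_true, if_true]
      rw [Complex.norm_def, hnsq u w h, Real.sqrt_one]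
  have hcard : ∀ v : V, (mdeg H v : ℝ) = ∑ u, (if H v u ≠ 0 then (1:ℝ) else 0) := by
    intro v
    rw [Finset.sum_boole]
    norm_cast
    rw [mdeg, Nat.card_eq_fintype_card, Fintype.card_subtype]
  have hmdeg_card : ∀ v : V, (mdeg H v : ℝ) = ∑ u, ‖H v u‖ := by
    intro v
    rw [hcard v]
    exact Finset.sum_congr rfl fun u _ => (habs v u).symm
  have hfin : ((fun z => ‖z‖) '' spectrum ℂ H).Finite :=
    (Matrix.finite_spectrum H).image _
  have hbdd := hfin.bddAbove
  have hne : (spectrum ℂ H).Nonempty :=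
    spectrum.nonempty_of_isAlgClosed_of_finiteDimensional ℂ H
  have hmemle : ∀ μ ∈ spectrum ℂ H, ‖μ‖ ≤ specRad H :=
    fun μ h => le_csSup hbdd ⟨μ, h, rfl⟩
  have hρ0 : 0 ≤ specRad H := by
    obtain ⟨μ, hμ⟩ := hne
    exact (norm_nonneg μ).trans (hmemle μ hμ)
  -- upper bound
  have hub : ∀ μ ∈ spectrum ℂ H, ‖μ‖ ≤ (maxDeg H : ℝ) := by
    intro μ hμ
    have hnu : ¬ IsUnit (algebraMap ℂ (Matrix V V ℂ) μ - H) := spectrum.mem_iff.mp hμ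
    have hdet : (algebraMap ℂ (Matrix V V ℂ) μ - H).det = 0 := by
      by_contra hdet
      exact hnu ((Matrix.isUnit_iff_isUnit_det _).mpr (isUnit_iff_ne_zero.mpr hdet))
    obtain ⟨x, hx0, hx⟩ := (Matrix.exists_mulVec_eq_zero_iff).mpr hdet
    have hxeq : ∀ w, (H.mulVec x) w = μ * x w := by
      intro w
      have h1 : (algebraMap ℂ (Matrix V V ℂ) μ).mulVec x = μ • x := by
        rw [Algebra.algebraMap_eq_smul_one, Matrix.smul_mulVec, Matrix.one_mulVec]
      have h0 := congrFun hx w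
      rw [Matrix.sub_mulVec, h1] at h0
      have h2 : μ * x w - (H.mulVec x) w = 0 := by simpa using h0
      exact (sub_eq_zero.mp h2).symm
    obtain ⟨v, -, hv⟩ := Finset.exists_max_image Finset.univ (fun w => ‖x w‖)
      ⟨Classical.arbitrary V, Finset.mem_univ _⟩
    have hxv : 0 < ‖x v‖ := by
      obtain ⟨u, hu⟩ := Function.ne_iff.mp hx0
      exact lt_of_lt_of_le (norm_pos_iff.mpr (by simpa using hu)) (hv u (Finset.mem_univ u))
    have key : ‖μ‖ * ‖x v‖ ≤ (maxDeg H : ℝ) * ‖x v‖ := by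
      have h1 : ‖μ‖ * ‖x v‖ = ‖(H.mulVec x) v‖ := by
        rw [hxeq v, norm_mul]
      have hmv : (H.mulVec x) v = ∑ u, H v u * x u := rfl
      have h2 : ‖(H.mulVec x) v‖ ≤ ∑ u, ‖H v u‖ * ‖x u‖ := by
        rw [hmv]
        refine (norm_sum_le _ _).trans ?_
        exact le_of_eq (Finset.sum_congr rfl fun u _ => norm_mul _ _)
      rw [h1]
      refine h2.trans ?_
      calc ∑ u, ‖H v u‖ * ‖x u‖
          ≤ ∑ u, ‖H v u‖ * ‖x v‖ :=
            Finset.sum_le_sum fun u _ =>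
              mul_le_mul_of_nonneg_left (hv u (Finset.mem_univ u)) (norm_nonneg _)
        _ = (mdeg H v : ℝ) * ‖x v‖ := by rw [← Finset.sum_mul, ← hmdeg_card v]
        _ ≤ (maxDeg H : ℝ) * ‖x v‖ := by
            refine mul_le_mul_of_nonneg_right ?_ (norm_nonneg _)
            have hle : mdeg H v ≤ maxDeg H := Finset.le_sup (Finset.mem_univ v)
            exact Nat.cast_le.mpr hle
    exact le_of_mul_le_mul_right key hxv
  have hub' : specRad H ≤ (maxDeg H : ℝ) :=
    Real.sSup_le (by rintro y ⟨μ, hμ, rfl⟩; exact hub μ hμ) (Nat.cast_nonneg _)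
  -- lower bound
  have hA2 : (H ^ 2).IsHermitian := hHerm.pow 2
  have hspec2 : spectrum ℂ (H ^ 2) = (· ^ 2) '' spectrum ℂ H :=
    spectrum.map_pow_of_pos H (by norm_num)
  have heig : ∀ i, |hA2.eigenvalues i| ≤ (specRad H) ^ 2 := by
    intro i
    have h0 := hA2.eigenvalues_mem_spectrum_real i
    have h1 : ((hA2.eigenvalues i : ℝ) : ℂ) ∈ spectrum ℂ (H ^ 2) := by
      rw [← Complex.coe_algebraMap]
      exact (spectrum.algebraMap_mem_iff ℂ).mpr h0
    rw [hspec2] at h1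
    obtain ⟨μ, hμ, hμ2⟩ := h1
    have habsμ : |hA2.eigenvalues i| = (‖μ‖) ^ 2 := by
      rw [← Real.norm_eq_abs, ← Complex.norm_real, ← hμ2, norm_pow]
    rw [habsμ]
    exact pow_le_pow_left₀ (norm_nonneg μ) (hmemle μ hμ) 2
  obtain ⟨v, -, hvdeg⟩ := Finset.exists_mem_eq_sup Finset.univ
    ⟨Classical.arbitrary V, Finset.mem_univ _⟩ (mdeg H)
  have hdiag2 : ((H ^ 2) v v).re = (mdeg H v : ℝ) := by
    have h1 : (H ^ 2) v v = ∑ u, (Complex.normSq (H v u) : ℂ) := by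
      rw [pow_two, Matrix.mul_apply]
      refine Finset.sum_congr rfl fun u _ => ?_
      rw [hherm u v]
      exact Complex.mul_conj _
    rw [h1, Complex.re_sum, hcard v]
    refine Finset.sum_congr rfl fun u _ => ?_
    by_cases h : H v u = 0
    · simp [h]
    · simp [h, hnsq v u h]
  have hlow : (maxDeg H : ℝ) ≤ (specRad H) ^ 2 := by
    have hd := diag_le_of_eig_le' hA2 heig v
    rw [hdiag2] at hd
    have : (maxDeg H : ℝ) = (mdeg H v : ℝ) := by exact_mod_cast congrArg Nat.cast hvdeg
    rw [this]
    exact hd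
  constructor
  · have h := Real.sqrt_le_sqrt hlow
    rwa [Real.sqrt_sq hρ0] at h
  · exact hub'
end

section
/- Let (H_k) be a sequence of Hermitian adjacency matrices of mixed graphs, H_k : Matrix (Fin n_k) (Fin n_k) ℂ with n_k ≥ 1, such that each underlying simple graph G(H_k) is connected, ρ(H_i) ≠ ρ(H_j) whenever i ≠ j, and ρ(H_k) converges to some real number γ. Then the diameters of the graphs G(H_k) tend to infinity: for every natural number D there is N such that for all k ≥ N the diameter of G(H_k) exceeds D. -/
open Polynomial Filter

section AuxProof
open Matrix Finset

lemma mixed_isHermitian {V : Type*} {H : Matrix V V ℂ} (h : IsMixedAdj H) :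
    H.IsHermitian := by
  ext i j
  rw [Matrix.conjTranspose_apply]
  exact (h.2.2 i j).symm

open Classical in
lemma mdeg_eq_sum {n : ℕ} {H : Matrix (Fin n) (Fin n) ℂ} (h : IsMixedAdj H) (v : Fin n) :
    (mdeg H v : ℝ) = ∑ j, (Complex.normSq (H v j) : ℝ) := by
  have h1 : ∀ j, (Complex.normSq (H v j) : ℝ) = if H v j ≠ 0 then 1 else 0 := by
    intro j
    rcases h.2.1 v j with h0 | h0 | h0 | h0 <;> simp [h0, Complex.I_ne_zero]
  rw [Finset.sum_congr rfl fun j _ => h1 j, Finset.sum_boole]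
  unfold mdeg
  rw [Nat.card_eq_fintype_card, Fintype.card_subtype]

lemma eigen_abs_le {n : ℕ} {H : Matrix (Fin n) (Fin n) ℂ} (hH : H.IsHermitian) (j : Fin n) :
    |hH.eigenvalues j| ≤ specRad H := by
  have hmem : ((hH.eigenvalues j : ℝ) : ℂ) ∈ spectrum ℂ H := by
    have := hH.eigenvalues_mem_spectrum_real j
    exact spectrum.algebraMap_mem ℂ this
  have : ‖((hH.eigenvalues j : ℝ) : ℂ)‖ ∈
      ((fun z => ‖z‖) '' spectrum ℂ H) := ⟨_, hmem, rfl⟩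
  have hb : BddAbove ((fun z => ‖z‖) '' spectrum ℂ H) :=
    ((Matrix.finite_spectrum H).image _).bddAbove
  simpa [Complex.norm_real, specRad] using le_csSup hb this

lemma mdeg_le_specRad_sq {n : ℕ} {H : Matrix (Fin n) (Fin n) ℂ} (h : IsMixedAdj H) (v : Fin n) :
    (mdeg H v : ℝ) ≤ (specRad H) ^ 2 := by
  have hH := mixed_isHermitian h
  set U : Matrix (Fin n) (Fin n) ℂ := (hH.eigenvectorUnitary : Matrix (Fin n) (Fin n) ℂ) with hU
  set lam := hH.eigenvalues with hlam
  have hUU : U * star U = 1 := (Matrix.mem_unitaryGroup_iff).mp hH.eigenvectorUnitary.2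
  have hUU' : star U * U = 1 := (Matrix.mem_unitaryGroup_iff').mp hH.eigenvectorUnitary.2
  set d : Fin n → ℂ := fun i => ((lam i : ℝ) : ℂ) with hd
  have hspec : H = U * Matrix.diagonal d * star U := hH.spectral_theorem
  have hH2 : H * H = U * Matrix.diagonal (fun i => d i * d i) * star U := by
    calc H * H = (U * Matrix.diagonal d * star U) * (U * Matrix.diagonal d * star U) := by
          rw [← hspec]
      _ = U * (Matrix.diagonal d * ((star U * U) * (Matrix.diagonal d * star U))) := by
          simp only [Matrix.mul_assoc]
      _ = U * Matrix.diagonal (fun i => d i * d i) * star U := by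
          rw [hUU', Matrix.one_mul, ← Matrix.mul_assoc (Matrix.diagonal d),
            Matrix.diagonal_mul_diagonal, Matrix.mul_assoc]
  -- diagonal entry of H * H two ways
  have hdeg : (H * H) v v = ((mdeg H v : ℝ) : ℂ) := by
    rw [Matrix.mul_apply, mdeg_eq_sum h v]
    push_cast
    refine Finset.sum_congr rfl fun j _ => ?_
    rw [h.2.2 j v, Complex.star_def, Complex.mul_conj]
  have hdiag : (H * H) v v
      = ((∑ j, (lam j) ^ 2 * Complex.normSq (U v j) : ℝ) : ℂ) := by
    rw [hH2, Matrix.mul_apply]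
    push_cast
    refine Finset.sum_congr rfl fun j _ => ?_
    rw [Matrix.mul_diagonal, Matrix.star_apply, Complex.star_def, ← Complex.mul_conj]
    simp only [hd]
    ring
  have hsum1 : (∑ j, (Complex.normSq (U v j) : ℝ)) = 1 := by
    have h1 : (U * star U) v v = 1 := by rw [hUU, Matrix.one_apply_eq]
    rw [Matrix.mul_apply] at h1
    have h2 : (((∑ j, (Complex.normSq (U v j) : ℝ)) : ℝ) : ℂ) = 1 := by
      push_cast
      rw [← h1]
      refine Finset.sum_congr rfl fun j _ => ?_
      rw [Matrix.star_apply, Complex.star_def, Complex.mul_conj]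
    exact_mod_cast h2
  have hkey : (mdeg H v : ℝ) = ∑ j, (lam j) ^ 2 * Complex.normSq (U v j) := by
    have := hdeg.symm.trans hdiag
    exact_mod_cast this
  rw [hkey]
  calc ∑ j, (lam j) ^ 2 * Complex.normSq (U v j)
      ≤ ∑ j, (specRad H) ^ 2 * Complex.normSq (U v j) := by
        refine Finset.sum_le_sum fun j _ => ?_
        refine mul_le_mul_of_nonneg_right ?_ (Complex.normSq_nonneg _)
        have h1 := eigen_abs_le hH j
        have h2 : (0:ℝ) ≤ |hH.eigenvalues j| := abs_nonneg _
        nlinarith [sq_abs (hH.eigenvalues j)]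
    _ = (specRad H) ^ 2 := by rw [← Finset.mul_sum, hsum1, mul_one]

open Classical in
lemma moore_bound {V : Type*} [Fintype V] (G : SimpleGraph V) (hc : G.Connected)
    (Δ D : ℕ) (hdeg : ∀ v, (Finset.univ.filter (G.Adj v)).card ≤ Δ)
    (hD : ∀ u v : V, G.dist u v ≤ D) : Fintype.card V ≤ (Δ + 1) ^ (D + 1) := by
  classical
  obtain ⟨v0⟩ := hc.nonempty
  set B : ℕ → Finset V := fun r => Finset.univ.filter fun u => G.dist v0 u ≤ r with hB
  have hstep : ∀ r, (B (r+1)).card ≤ (Δ+1) * (B r).card := by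
    intro r
    have hsub : B (r+1) ⊆ (B r) ∪ (B r).biUnion (fun w => Finset.univ.filter (G.Adj w)) := by
      intro u hu
      simp only [hB, Finset.mem_filter, Finset.mem_univ, true_and] at hu
      by_cases hr : G.dist v0 u ≤ r
      · exact Finset.mem_union_left _ (by simp [hB, hr])
      · have hne : G.dist u v0 = r + 1 := by rw [SimpleGraph.dist_comm]; omega
        obtain ⟨p, hp⟩ := (hc u v0).exists_walk_length_eq_dist
        rw [hne] at hp
        cases p with
        | nil => simp at hp
        | @cons _ w _ h q =>
          refine Finset.mem_union_right _ (Finset.mem_biUnion.mpr ⟨w, ?_, ?_⟩)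
          · simp only [hB, Finset.mem_filter, Finset.mem_univ, true_and]
            rw [SimpleGraph.dist_comm]
            have : q.length = r := by simpa using hp
            exact this ▸ SimpleGraph.dist_le q
          · simp [h.symm]
    calc (B (r+1)).card ≤ ((B r) ∪ (B r).biUnion (fun w => Finset.univ.filter (G.Adj w))).card :=
          Finset.card_le_card hsub
      _ ≤ (B r).card + ((B r).biUnion (fun w => Finset.univ.filter (G.Adj w))).card :=
          Finset.card_union_le _ _
      _ ≤ (B r).card + ∑ w ∈ B r, (Finset.univ.filter (G.Adj w)).card :=
          Nat.add_le_add_left (Finset.card_biUnion_le) _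
      _ ≤ (B r).card + ∑ _w ∈ B r, Δ :=
          Nat.add_le_add_left (Finset.sum_le_sum fun w _ => hdeg w) _
      _ = (Δ+1) * (B r).card := by rw [Finset.sum_const, smul_eq_mul]; ring
  have hball : ∀ r, (B r).card ≤ (Δ+1)^(r+1) := by
    intro r
    induction r with
    | zero =>
      have hsub : B 0 ⊆ {v0} := by
        intro u hu
        simp only [hB, Finset.mem_filter, Finset.mem_univ, true_and, Nat.le_zero] at hu
        simp [(hc.dist_eq_zero_iff.mp hu).symm]
      calc (B 0).card ≤ 1 := by simpa using Finset.card_le_card hsub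
        _ ≤ (Δ+1)^1 := Nat.one_le_pow _ _ (Nat.succ_pos _)
    | succ r ih =>
      calc (B (r+1)).card ≤ (Δ+1) * (B r).card := hstep r
        _ ≤ (Δ+1) * (Δ+1)^(r+1) := Nat.mul_le_mul_left _ ih
        _ = (Δ+1)^(r+2) := by ring
  have huniv : (Finset.univ : Finset V) ⊆ B D := by
    intro u _
    simp only [hB, Finset.mem_filter, Finset.mem_univ, true_and]
    exact hD v0 u
  calc Fintype.card V = (Finset.univ : Finset V).card := rfl
    _ ≤ (B D).card := Finset.card_le_card huniv
    _ ≤ (Δ+1)^(D+1) := hball D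

open Classical in
lemma degree_filter_eq {V : Type*} [Fintype V] {H : Matrix V V ℂ} (h : IsMixedAdj H) (v : V) :
    (Finset.univ.filter ((underGraph H).Adj v)).card = mdeg H v := by
  have hadj : ∀ u, (underGraph H).Adj v u ↔ H v u ≠ 0 := by
    intro u
    rw [underGraph, SimpleGraph.fromRel_adj]
    constructor
    · rintro ⟨hne, h1 | h1⟩
      · exact h1
      · rw [h.2.2 v u]; exact star_ne_zero.mpr h1
    · intro h1
      refine ⟨?_, Or.inl h1⟩
      rintro rfl; exact h1 (h.1 v)
  rw [mdeg, Nat.card_eq_fintype_card, Fintype.card_subtype]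
  congr 1
  ext u
  simp [hadj u]

lemma finite_mixed (m : ℕ) : {A : Matrix (Fin m) (Fin m) ℂ | IsMixedAdj A}.Finite := by
  have hs : ({0, 1, Complex.I, -Complex.I} : Set ℂ).Finite := Set.toFinite _
  have hpi : (Set.pi (Set.univ : Set (Fin m))
      (fun _ => Set.pi (Set.univ : Set (Fin m))
        (fun _ => ({0, 1, Complex.I, -Complex.I} : Set ℂ)))).Finite :=
    Set.Finite.pi fun _ => Set.Finite.pi fun _ => hs
  apply hpi.subset
  intro A hA
  simp only [Set.mem_pi, Set.mem_univ, forall_true_left]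
  intro u v
  rcases hA.2.1 u v with h0 | h0 | h0 | h0 <;> simp [h0]

theorem stmt1Aux (n : ℕ → ℕ) (hn : ∀ k, 1 ≤ n k)
    (H : (k : ℕ) → Matrix (Fin (n k)) (Fin (n k)) ℂ)
    (hmixed : ∀ k, IsMixedAdj (H k))
    (hconn : ∀ k, (underGraph (H k)).Connected)
    (hdist : ∀ i j, i ≠ j → specRad (H i) ≠ specRad (H j))
    (γ : ℝ) (hlim : Tendsto (fun k => specRad (H k)) atTop (nhds γ)) :
    ∀ D : ℕ, ∃ N : ℕ, ∀ k, N ≤ k → D < gdiam (underGraph (H k)) := by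
  classical
  intro D
  obtain ⟨C, hC⟩ := hlim.bddAbove_range
  have hC' : ∀ k, specRad (H k) ≤ C := fun k => hC (Set.mem_range_self k)
  set Δ : ℕ := ⌈C^2⌉₊ with hΔ
  have hdegk : ∀ k v, (Finset.univ.filter ((underGraph (H k)).Adj v)).card ≤ Δ := by
    intro k v
    rw [degree_filter_eq (hmixed k)]
    have h1 := mdeg_le_specRad_sq (hmixed k) v
    have h0 : 0 ≤ specRad (H k) :=
      le_trans (abs_nonneg _) (eigen_abs_le (mixed_isHermitian (hmixed k)) ⟨0, hn k⟩)
    have h2 : (mdeg (H k) v : ℝ) ≤ (Δ : ℝ) := by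
      refine le_trans h1 (le_trans ?_ (Nat.le_ceil _))
      nlinarith [hC' k]
    exact_mod_cast h2
  set M : ℕ := (Δ+1)^(D+1) with hM
  have hSfin : (⋃ m ∈ Set.Iic M,
      specRad '' {A : Matrix (Fin m) (Fin m) ℂ | IsMixedAdj A}).Finite :=
    Set.Finite.biUnion (Set.finite_Iic M) fun m _ => (finite_mixed m).image _
  have hK : {k | gdiam (underGraph (H k)) ≤ D}.Finite := by
    apply Set.Finite.of_finite_image (f := fun k => specRad (H k))
    · apply hSfin.subset
      rintro _ ⟨k, hk, rfl⟩
      have hcard : n k ≤ M := by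
        have := moore_bound (underGraph (H k)) (hconn k) Δ D (hdegk k)
          (fun u v => le_trans (Finset.le_sup (f := fun p : Fin (n k) × Fin (n k) =>
            (underGraph (H k)).dist p.1 p.2) (Finset.mem_univ (u, v))) hk)
        simpa using this
      exact Set.mem_biUnion hcard ⟨H k, hmixed k, rfl⟩
    · intro a _ b _ hab
      by_contra hne
      exact hdist a b hne hab
  obtain ⟨N, hN⟩ := hK.bddAbove
  refine ⟨N + 1, fun k hk => ?_⟩
  by_contra hle
  push_neg at hle
  have : k ≤ N := hN hle
  omega

end AuxProof

/-- diameters tend to infinity. -/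
theorem stmt1 (n : ℕ → ℕ) (hn : ∀ k, 1 ≤ n k)
    (H : (k : ℕ) → Matrix (Fin (n k)) (Fin (n k)) ℂ)
    (hmixed : ∀ k, IsMixedAdj (H k))
    (hconn : ∀ k, (underGraph (H k)).Connected)
    (hdist : ∀ i j, i ≠ j → specRad (H i) ≠ specRad (H j))
    (γ : ℝ) (hlim : Tendsto (fun k => specRad (H k)) atTop (nhds γ)) :
    ∀ D : ℕ, ∃ N : ℕ, ∀ k, N ≤ k → D < gdiam (underGraph (H k)) := by
  exact stmt1Aux n hn H hmixed hconn hdist γ hlim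
end

section
/- For every n ≥ 4, the spectral radius of the mixed graph C'_{3,n} is at most Real.sqrt (2 + Real.sqrt 5). -/
open Polynomial Filter

namespace Stmt8Aux

noncomputable def rr : ℝ := Real.sqrt ((1 + Real.sqrt 5) / 2)
noncomputable def cc : ℝ := rr + rr⁻¹

lemma s5sq : Real.sqrt 5 ^ 2 = 5 := Real.sq_sqrt (by norm_num)
lemma rr_pos : 0 < rr := Real.sqrt_pos.mpr (by positivity)
lemma rr_sq : rr ^ 2 = (1 + Real.sqrt 5) / 2 := Real.sq_sqrt (by positivity)
lemma rr4 : rr ^ 4 = rr ^ 2 + 1 := by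
  have h := rr_sq
  have h5 := s5sq
  have h2 : rr ^ 4 = (rr ^ 2) ^ 2 := by ring
  rw [h2, h]
  linear_combination (1/4) * h5
lemma cc_mul_rr : cc * rr = rr ^ 2 + 1 := by
  have h := rr_pos.ne'
  unfold cc
  field_simp
lemma cc_pos : 0 < cc := by
  have h := rr_pos
  unfold cc
  positivity
lemma rr_le_cc : rr ≤ cc := le_add_of_nonneg_right (inv_nonneg.mpr rr_pos.le)
lemma sqrt_eq_cc : Real.sqrt (2 + Real.sqrt 5) = cc := by
  have h0 : 0 ≤ cc := cc_pos.le
  have hne := rr_pos.ne'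
  have h2 : cc ^ 2 = 2 + Real.sqrt 5 := by
    unfold cc
    field_simp
    linear_combination rr4 + (1 - Real.sqrt 5) * rr_sq - (1/2) * s5sq
  rw [← h2, Real.sqrt_sq h0]

lemma edge (xa ya xb yb : ℝ) :
    |2 * (xa * xb + ya * yb)| ≤ rr⁻¹ * (xa ^ 2 + ya ^ 2) + rr * (xb ^ 2 + yb ^ 2) := by
  have hr := rr_pos
  have hne := hr.ne'
  rw [abs_le]
  constructor
  · have h : rr⁻¹ * (xa ^ 2 + ya ^ 2) + rr * (xb ^ 2 + yb ^ 2) + 2 * (xa * xb + ya * yb)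
        = rr⁻¹ * ((xa + rr * xb) ^ 2 + (ya + rr * yb) ^ 2) := by
      field_simp
      ring
    have h2 : 0 ≤ rr⁻¹ * ((xa + rr * xb) ^ 2 + (ya + rr * yb) ^ 2) := by positivity
    linarith
  · have h : rr⁻¹ * (xa ^ 2 + ya ^ 2) + rr * (xb ^ 2 + yb ^ 2) - 2 * (xa * xb + ya * yb)
        = rr⁻¹ * ((xa - rr * xb) ^ 2 + (ya - rr * yb) ^ 2) := by
      field_simp
      ring
    have h2 : 0 ≤ rr⁻¹ * ((xa - rr * xb) ^ 2 + (ya - rr * yb) ^ 2) := by positivity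
    linarith

lemma tri (x0 y0 x1 y1 x2 y2 : ℝ) :
    |2 * ((x0 * x1 + y0 * y1) + (x1 * x2 + y1 * y2) + (x0 * y2 - y0 * x2))|
      ≤ rr * (x0 ^ 2 + y0 ^ 2) + cc * (x1 ^ 2 + y1 ^ 2) + cc * (x2 ^ 2 + y2 ^ 2) := by
  have hr := rr_pos
  have h4 := rr4
  have hc := cc_mul_rr
  have h3 : (0:ℝ) < rr ^ 3 := by positivity
  rw [abs_le]
  constructor
  · have h : rr ^ 3 * (rr * (x0 ^ 2 + y0 ^ 2) + cc * (x1 ^ 2 + y1 ^ 2) + cc * (x2 ^ 2 + y2 ^ 2)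
        + 2 * ((x0 * x1 + y0 * y1) + (x1 * x2 + y1 * y2) + (x0 * y2 - y0 * x2)))
        = rr ^ 2 * ((rr * x0 + x1 + y2) ^ 2 + (rr * y0 + y1 - x2) ^ 2)
          + ((rr ^ 2 * x1 + rr * x2 - y2) ^ 2 + (rr ^ 2 * y1 + rr * y2 + x2) ^ 2) := by
      linear_combination (rr ^ 2 * (x1 ^ 2 + y1 ^ 2 + x2 ^ 2 + y2 ^ 2)) * hc + (x2 ^ 2 + y2 ^ 2) * h4
    nlinarith [h, sq_nonneg (rr * x0 + x1 + y2), sq_nonneg (rr * y0 + y1 - x2),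
      sq_nonneg (rr ^ 2 * x1 + rr * x2 - y2), sq_nonneg (rr ^ 2 * y1 + rr * y2 + x2),
      sq_nonneg rr, h3]
  · have h : rr ^ 3 * (rr * (x0 ^ 2 + y0 ^ 2) + cc * (x1 ^ 2 + y1 ^ 2) + cc * (x2 ^ 2 + y2 ^ 2)
        - 2 * ((x0 * x1 + y0 * y1) + (x1 * x2 + y1 * y2) + (x0 * y2 - y0 * x2)))
        = rr ^ 2 * ((rr * x0 - x1 - y2) ^ 2 + (rr * y0 - y1 + x2) ^ 2)
          + ((rr ^ 2 * x1 - rr * x2 - y2) ^ 2 + (rr ^ 2 * y1 - rr * y2 + x2) ^ 2) := by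
      linear_combination (rr ^ 2 * (x1 ^ 2 + y1 ^ 2 + x2 ^ 2 + y2 ^ 2)) * hc + (x2 ^ 2 + y2 ^ 2) * h4
    nlinarith [h, sq_nonneg (rr * x0 - x1 - y2), sq_nonneg (rr * y0 - y1 + x2),
      sq_nonneg (rr ^ 2 * x1 - rr * x2 - y2), sq_nonneg (rr ^ 2 * y1 - rr * y2 + x2),
      sq_nonneg rr, h3]

def ff : ℕ → ℕ → ℂ := fun a b =>
  if (a = 0 ∧ b = 1) ∨ (a = 1 ∧ b = 2) ∨ (a = 0 ∧ b = 3) then 1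
  else if a = 2 ∧ b = 0 then Complex.I
  else if 3 ≤ a ∧ a + 1 = b then 1 else 0

noncomputable def ent (w : ℕ → ℂ) (a b : ℕ) : ℂ :=
  (starRingEnd ℂ) (w a) * (ff a b + (starRingEnd ℂ) (ff b a)) * w b

noncomputable def qsum (n : ℕ) (w : ℕ → ℂ) : ℂ :=
  ∑ a ∈ Finset.range n, ∑ b ∈ Finset.range n, ent w a b

lemma ff_n_eq_zero {n b : ℕ} (hn : 4 ≤ n) (hb : b ≤ n) : ff n b = 0 := by
  unfold ff
  split_ifs with h1 h2 h3
  · omega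
  · omega
  · omega
  · rfl

lemma ff_a_n {n a : ℕ} (hn : 4 ≤ n) (ha : a ≤ n) (hne : a ≠ n - 1) : ff a n = 0 := by
  unfold ff
  split_ifs with h1 h2 h3
  · omega
  · omega
  · omega
  · rfl

lemma ff_pred_n {n : ℕ} (hn : 4 ≤ n) : ff (n - 1) n = 1 := by
  unfold ff
  split_ifs with h1 h2 h3
  · rfl
  · omega
  · rfl
  · omega

lemma qsum_succ (n : ℕ) (hn : 4 ≤ n) (w : ℕ → ℂ) :
    qsum (n + 1) w = qsum n w
      + ((starRingEnd ℂ) (w (n - 1)) * w n + (starRingEnd ℂ) (w n) * w (n - 1)) := by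
  unfold qsum
  rw [Finset.sum_range_succ]
  simp only [Finset.sum_range_succ]
  rw [Finset.sum_add_distrib]
  have h1 : ∑ a ∈ Finset.range n, ent w a n = (starRingEnd ℂ) (w (n - 1)) * w n := by
    rw [Finset.sum_eq_single_of_mem (n - 1) (Finset.mem_range.mpr (by omega))]
    · rw [ent, ff_pred_n hn, ff_n_eq_zero hn (by omega)]
      simp
    · intro b hb hbne
      rw [ent, ff_a_n hn (Finset.mem_range.mp hb).le hbne,
        ff_n_eq_zero hn (Finset.mem_range.mp hb).le]
      simp
  have h2 : ∑ b ∈ Finset.range n, ent w n b = (starRingEnd ℂ) (w n) * w (n - 1) := by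
    rw [Finset.sum_eq_single_of_mem (n - 1) (Finset.mem_range.mpr (by omega))]
    · rw [ent, ff_pred_n hn, ff_n_eq_zero hn (by omega)]
      simp
    · intro b hb hbne
      rw [ent, ff_a_n hn (Finset.mem_range.mp hb).le hbne,
        ff_n_eq_zero hn (Finset.mem_range.mp hb).le]
      simp
  have h3 : ent w n n = 0 := by
    rw [ent, ff_n_eq_zero hn le_rfl]
    simp
  rw [h1, h2, h3]
  ring

lemma qsum_four (w : ℕ → ℂ) :
    qsum 4 w = ((starRingEnd ℂ) (w 0) * w 1 + (starRingEnd ℂ) (w 1) * w 0)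
      + ((starRingEnd ℂ) (w 1) * w 2 + (starRingEnd ℂ) (w 2) * w 1)
      + ((starRingEnd ℂ) (w 0) * w 3 + (starRingEnd ℂ) (w 3) * w 0)
      + ((starRingEnd ℂ) (w 0) * (-Complex.I) * w 2 + (starRingEnd ℂ) (w 2) * Complex.I * w 0) := by
  show (∑ a ∈ Finset.range 4, ∑ b ∈ Finset.range 4, ent w a b) = _
  simp only [Finset.sum_range_succ, Finset.sum_range_zero, ent, ff]
  norm_num
  ring

lemma main (n : ℕ) (hn : 4 ≤ n) (w : ℕ → ℂ) :
    |(qsum n w).re| ≤ cc * ∑ a ∈ Finset.range (n - 1), Complex.normSq (w a)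
      + rr * Complex.normSq (w (n - 1)) := by
  induction n, hn using Nat.le_induction with
  | base =>
    have T := tri (w 0).re (w 0).im (w 1).re (w 1).im (w 2).re (w 2).im
    have E := edge (w 0).re (w 0).im (w 3).re (w 3).im
    rw [qsum_four]
    norm_num [Finset.sum_range_succ, Complex.normSq_apply, Complex.add_re, Complex.mul_re,
      Complex.mul_im, Complex.conj_re, Complex.conj_im, Complex.neg_re, Complex.neg_im,
      Complex.I_re, Complex.I_im]
    unfold cc at T ⊢
    rw [abs_le] at T E ⊢
    constructor <;> [linarith [T.1, E.1]; linarith [T.2, E.2]]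
  | succ n hn ih =>
    have E := edge (w (n - 1)).re (w (n - 1)).im (w n).re (w n).im
    rw [qsum_succ n hn w, Complex.add_re, Nat.add_sub_cancel]
    have hz : ((starRingEnd ℂ) (w (n - 1)) * w n + (starRingEnd ℂ) (w n) * w (n - 1)).re
        = 2 * ((w (n - 1)).re * (w n).re + (w (n - 1)).im * (w n).im) := by
      simp [Complex.add_re, Complex.mul_re, Complex.conj_re, Complex.conj_im]
      ring
    rw [hz]
    have hs : ∑ a ∈ Finset.range n, Complex.normSq (w a)
        = ∑ a ∈ Finset.range (n - 1), Complex.normSq (w a) + Complex.normSq (w (n - 1)) := by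
      conv_lhs => rw [show n = (n - 1) + 1 by omega]
      rw [Finset.sum_range_succ]
    rw [hs]
    have habs := abs_add_le ((qsum n w).re)
      (2 * ((w (n - 1)).re * (w n).re + (w (n - 1)).im * (w n).im))
    have hnsq1 : Complex.normSq (w (n - 1)) = (w (n - 1)).re ^ 2 + (w (n - 1)).im ^ 2 := by
      rw [Complex.normSq_apply]; ring
    have hnsq2 : Complex.normSq (w n) = (w n).re ^ 2 + (w n).im ^ 2 := by
      rw [Complex.normSq_apply]; ring
    calc |(qsum n w).re + 2 * ((w (n - 1)).re * (w n).re + (w (n - 1)).im * (w n).im)|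
        ≤ |(qsum n w).re| + |2 * ((w (n - 1)).re * (w n).re + (w (n - 1)).im * (w n).im)| := habs
      _ ≤ _ := by
          rw [hnsq1, hnsq2]; rw [hnsq1] at ih
          unfold cc at ih ⊢
          rw [abs_le] at E
          have hq1 := neg_abs_le ((qsum n w).re)
          have hq2 := le_abs_self ((qsum n w).re)
          cases abs_cases (2 * ((w (n - 1)).re * (w n).re + (w (n - 1)).im * (w n).im)) with
          | inl h => rw [h.1]; linarith [ih, E.2]
          | inr h => rw [h.1]; linarith [ih, E.1]

lemma qsum_conj (n : ℕ) (w : ℕ → ℂ) : (starRingEnd ℂ) (qsum n w) = qsum n w := by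
  have hent : ∀ a b, (starRingEnd ℂ) (ent w a b) = ent w b a := by
    intro a b
    unfold ent
    simp only [map_mul, map_add, Complex.conj_conj]
    ring
  calc (starRingEnd ℂ) (qsum n w)
      = ∑ a ∈ Finset.range n, ∑ b ∈ Finset.range n, ent w b a := by
        unfold qsum
        simp only [map_sum]
        exact Finset.sum_congr rfl fun a _ => Finset.sum_congr rfl fun b _ => hent a b
    _ = qsum n w := Finset.sum_comm

lemma cp3_entry (n : ℕ) (i j : Fin n) :
    Cp3 n i j = ff (i : ℕ) (j : ℕ) + (starRingEnd ℂ) (ff (j : ℕ) (i : ℕ)) := rfl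

lemma spec_bound (n : ℕ) (hn : 4 ≤ n) (μ : ℂ) (hμ : μ ∈ spectrum ℂ (Cp3 n)) :
    ‖μ‖ ≤ cc := by
  rw [← AlgEquiv.spectrum_eq
    (Matrix.toLinAlgEquiv' : Matrix (Fin n) (Fin n) ℂ ≃ₐ[ℂ] _) (Cp3 n)] at hμ
  have hev : Module.End.HasEigenvalue (Matrix.toLinAlgEquiv' (Cp3 n)) μ :=
    Module.End.HasEigenvalue.of_mem_spectrum hμ
  obtain ⟨v, hv⟩ := hev.exists_hasEigenvector
  have hmv : (Cp3 n).mulVec v = μ • v := by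
    rw [← Matrix.toLinAlgEquiv'_apply]
    exact hv.apply_eq_smul
  set w : ℕ → ℂ := fun a => if h : a < n then v ⟨a, h⟩ else 0 with hw
  set s : ℝ := ∑ i : Fin n, Complex.normSq (v i) with hsdef
  have hw_eq : ∀ i : Fin n, w (i : ℕ) = v i := by
    intro i
    simp [hw, i.isLt]
  have hs_pos : 0 < s := by
    obtain ⟨i, hi⟩ := Function.ne_iff.mp hv.right
    refine Finset.sum_pos' (fun j _ => Complex.normSq_nonneg _) ⟨i, Finset.mem_univ i, ?_⟩
    exact Complex.normSq_pos.mpr hi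
  have hquad : qsum n w = μ * (s : ℂ) := by
    have h1 : qsum n w = ∑ i : Fin n, (starRingEnd ℂ) (v i) * ((Cp3 n).mulVec v i) := by
      have hrow : ∀ i : Fin n,
          (starRingEnd ℂ) (v i) * ((Cp3 n).mulVec v i)
            = ∑ b ∈ Finset.range n, ent w (i : ℕ) b := by
        intro i
        have : (Cp3 n).mulVec v i = ∑ j : Fin n, Cp3 n i j * v j := by
          simp [Matrix.mulVec, dotProduct]
        rw [this, Finset.mul_sum]
        have h2 : ∀ j : Fin n,
            (starRingEnd ℂ) (v i) * (Cp3 n i j * v j) = ent w (i : ℕ) (j : ℕ) := by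
          intro j
          rw [ent, cp3_entry, hw_eq, hw_eq]
          ring
        calc ∑ j : Fin n, (starRingEnd ℂ) (v i) * (Cp3 n i j * v j)
            = ∑ j : Fin n, ent w (i : ℕ) (j : ℕ) := Finset.sum_congr rfl fun j _ => h2 j
          _ = ∑ b ∈ Finset.range n, ent w (i : ℕ) b :=
              Fin.sum_univ_eq_sum_range (fun b => ent w (i : ℕ) b) n
      calc qsum n w = ∑ a ∈ Finset.range n, ∑ b ∈ Finset.range n, ent w a b := rfl
        _ = ∑ i : Fin n, ∑ b ∈ Finset.range n, ent w (i : ℕ) b :=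
            (Fin.sum_univ_eq_sum_range (fun a => ∑ b ∈ Finset.range n, ent w a b) n).symm
        _ = ∑ i : Fin n, (starRingEnd ℂ) (v i) * ((Cp3 n).mulVec v i) :=
            Finset.sum_congr rfl fun i _ => (hrow i).symm
    rw [h1, hmv]
    have : ∀ i : Fin n, (starRingEnd ℂ) (v i) * ((μ • v) i)
        = μ * ((Complex.normSq (v i) : ℝ) : ℂ) := by
      intro i
      simp only [Pi.smul_apply, smul_eq_mul]
      rw [Complex.normSq_eq_conj_mul_self]
      ring
    rw [Finset.sum_congr rfl fun i _ => this i, ← Finset.mul_sum]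
    congr 1
    rw [hsdef]
    push_cast
    rfl
  have hsc : (s : ℂ) ≠ 0 := Complex.ofReal_ne_zero.mpr hs_pos.ne'
  have him : μ.im = 0 := by
    have hconj := qsum_conj n w
    rw [hquad, map_mul, Complex.conj_ofReal] at hconj
    have := mul_right_cancel₀ hsc hconj
    exact Complex.conj_eq_iff_im.mp this
  have hre : (qsum n w).re = μ.re * s := by
    rw [hquad]
    simp [Complex.mul_re, him]
  have hb := main n hn w
  have hsum_eq : ∑ a ∈ Finset.range n, Complex.normSq (w a) = s := by
    rw [hsdef, ← Fin.sum_univ_eq_sum_range (fun a => Complex.normSq (w a)) n]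
    exact Finset.sum_congr rfl fun i _ => by rw [hw_eq]
  have hsplit : ∑ a ∈ Finset.range n, Complex.normSq (w a)
      = ∑ a ∈ Finset.range (n - 1), Complex.normSq (w a) + Complex.normSq (w (n - 1)) := by
    conv_lhs => rw [show n = (n - 1) + 1 by omega]
    rw [Finset.sum_range_succ]
  have hchain : |(qsum n w).re| ≤ cc * s := by
    have h1 : rr * Complex.normSq (w (n - 1)) ≤ cc * Complex.normSq (w (n - 1)) :=
      mul_le_mul_of_nonneg_right rr_le_cc (Complex.normSq_nonneg _)
    calc |(qsum n w).re|
        ≤ cc * ∑ a ∈ Finset.range (n - 1), Complex.normSq (w a)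
          + rr * Complex.normSq (w (n - 1)) := hb
      _ ≤ cc * ∑ a ∈ Finset.range (n - 1), Complex.normSq (w a)
          + cc * Complex.normSq (w (n - 1)) := by linarith
      _ = cc * ∑ a ∈ Finset.range n, Complex.normSq (w a) := by rw [hsplit]; ring
      _ = cc * s := by rw [hsum_eq]
  rw [hre, abs_mul, abs_of_pos hs_pos] at hchain
  have hmu_re : |μ.re| ≤ cc := (mul_le_mul_iff_of_pos_right hs_pos).mp hchain
  have hμ_eq : μ = ((μ.re : ℝ) : ℂ) := Complex.ext rfl (by simp [him])
  rw [hμ_eq, Complex.norm_real, Real.norm_eq_abs]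
  exact hmu_re

end Stmt8Aux

/-- `ρ(C'_{3,n}) ≤ √(2+√5)`. -/
theorem stmt8 (n : ℕ) (hn : 4 ≤ n) :
    specRad (Cp3 n) ≤ Real.sqrt (2 + Real.sqrt 5) := by
  rw [Stmt8Aux.sqrt_eq_cc]
  apply Real.sSup_le
  · rintro x ⟨μ, hμ, rfl⟩
    exact Stmt8Aux.spec_bound n hn μ hμ
  · exact Stmt8Aux.cc_pos.le
end

section
/- For k ≥ 3 and 1 ≤ t ≤ k−1, let D_{k,t} be the mixed graph on Fin (k+2) consisting of the imaginary k-cycle on {0,…,k−1} (H i (i+1) = 1 for 0 ≤ i ≤ k−2 and H (k−1) 0 = Complex.I) together with a pendant vertex k joined to 0 (H 0 k = 1) and a pendant vertex k+1 joined to t (H t (k+1) = 1). Then the characteristic polynomial of D_{k,t} satisfies charpoly(D_{k,t}) = X·(X² − 2)·p_{k−1} − 2·X²·p_{k−2} + p_{t−1}·p_{k−1−t} in ℂ[X], where p_m denotes the characteristic polynomial of the adjacency matrix of the path graph on m vertices, with p_0 = 1. -/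
open Polynomial Filter

namespace S10


noncomputable def q : ℕ → Polynomial ℂ
  | 0 => 1
  | 1 => X
  | (n+2) => X * q (n+1) - q n

lemma q_zero : q 0 = 1 := rfl
lemma q_one : q 1 = X := rfl
lemma q_succ_succ (n : ℕ) : q (n+2) = X * q (n+1) - q n := rfl

variable {R' : Type*} [CommRing R']

lemma sum_two {n : ℕ} (f : Fin n → R') (a b : Fin n) (hab : a ≠ b)
    (h : ∀ j, j ≠ a → j ≠ b → f j = 0) : ∑ j, f j = f a + f b := by
  have : ∑ j, f j = ∑ j ∈ ({a, b} : Finset (Fin n)), f j := by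
    refine (Finset.sum_subset (Finset.subset_univ _) ?_).symm
    intro x _ hx
    simp only [Finset.mem_insert, Finset.mem_singleton, not_or] at hx
    exact h x hx.1 hx.2
  rw [this, Finset.sum_pair hab]

lemma sum_three {n : ℕ} (f : Fin n → R') (a b c : Fin n) (hab : a ≠ b) (hac : a ≠ c)
    (hbc : b ≠ c)
    (h : ∀ j, j ≠ a → j ≠ b → j ≠ c → f j = 0) : ∑ j, f j = f a + f b + f c := by
  have : ∑ j, f j = ∑ j ∈ ({a, b, c} : Finset (Fin n)), f j := by
    refine (Finset.sum_subset (Finset.subset_univ _) ?_).symm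
    intro x _ hx
    simp only [Finset.mem_insert, Finset.mem_singleton, not_or] at hx
    exact h x hx.1 hx.2.1 hx.2.2
  rw [this]
  rw [Finset.sum_insert (by simp [hab, hac]), Finset.sum_pair hbc, add_assoc]

lemma coe_succAbove {n : ℕ} (p : Fin (n+1)) (i : Fin n) :
    ((p.succAbove i : Fin (n+1)) : ℕ) = if (i : ℕ) < (p : ℕ) then (i : ℕ) else (i : ℕ) + 1 := by
  rw [Fin.succAbove]
  by_cases h : (i : ℕ) < (p : ℕ)
  · rw [if_pos (show i.castSucc < p from by simpa [Fin.lt_def] using h), if_pos h, Fin.coe_castSucc]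
  · rw [if_neg (show ¬ i.castSucc < p from by simpa [Fin.lt_def] using h), if_neg h, Fin.val_succ]

lemma det_pendant {n : ℕ} (M : Matrix (Fin (n+2)) (Fin (n+2)) R') (v : Fin (n+1)) (b c d : R')
    (hrow : ∀ j : Fin (n+1), M (Fin.last (n+1)) j.castSucc = if j = v then b else 0)
    (hcol : ∀ i : Fin (n+1), M i.castSucc (Fin.last (n+1)) = if i = v then c else 0)
    (hd : M (Fin.last (n+1)) (Fin.last (n+1)) = d) :
    M.det = d * (M.submatrix Fin.castSucc Fin.castSucc).det
      - b * c * ((M.submatrix (Fin.castSucc ∘ v.succAbove) (Fin.castSucc ∘ v.succAbove)).det) := by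
  rw [Matrix.det_succ_row M (Fin.last (n+1))]
  rw [sum_two _ (v.castSucc) (Fin.last (n+1))
    (by simp [Fin.ext_iff]; omega)
    (fun j hja hjb => by
      rcases Fin.exists_castSucc_eq.mpr hjb with ⟨j', rfl⟩
      rw [hrow j', if_neg (fun h => hja (by rw [h]))]
      ring)]
  have hlastrow : Fin.succAbove (Fin.last (n+1)) = Fin.castSucc := Fin.succAbove_last
  -- term at last
  have hT2 : (-1 : R') ^ ((Fin.last (n+1) : ℕ) + (Fin.last (n+1) : ℕ)) *
      M (Fin.last (n+1)) (Fin.last (n+1)) *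
      (M.submatrix (Fin.succAbove (Fin.last (n+1))) (Fin.succAbove (Fin.last (n+1)))).det
      = d * (M.submatrix Fin.castSucc Fin.castSucc).det := by
    rw [hlastrow, hd, Even.neg_one_pow ⟨(Fin.last (n+1) : ℕ), by ring⟩, one_mul]
  -- term at v.castSucc
  have hcolN : Fin.succAbove (v.castSucc) (Fin.last n) = Fin.last (n+1) := by
    ext
    rw [coe_succAbove]
    simp only [Fin.val_last, Fin.coe_castSucc]
    have := v.isLt
    split_ifs <;> omega
  set N := M.submatrix Fin.castSucc (Fin.succAbove (v.castSucc)) with hN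
  have hNdet : N.det = (-1) ^ ((v : ℕ) + n) * c *
      (M.submatrix (Fin.castSucc ∘ v.succAbove) (Fin.castSucc ∘ v.succAbove)).det := by
    rw [Matrix.det_succ_column N (Fin.last n)]
    rw [Finset.sum_eq_single_of_mem v (Finset.mem_univ v) (fun i _ hi => by
      have : N i (Fin.last n) = 0 := by
        rw [hN]
        show M (Fin.castSucc i) (Fin.succAbove (v.castSucc) (Fin.last n)) = 0
        rw [hcolN, hcol i, if_neg hi]
      rw [this]; ring)]
    have hNv : N v (Fin.last n) = c := by
      rw [hN]
      show M (Fin.castSucc v) (Fin.succAbove (v.castSucc) (Fin.last n)) = c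
      rw [hcolN, hcol v, if_pos rfl]
    rw [hNv, Fin.succAbove_last]
    congr 2
    ext i j
    simp only [hN, Matrix.submatrix_apply, Function.comp_apply, Fin.castSucc_succAbove_castSucc]
  have e1 : M (Fin.last (n+1)) v.castSucc = b := by rw [hrow v, if_pos rfl]
  rw [e1, hT2, hlastrow, hNdet]
  simp only [Fin.val_last, Fin.coe_castSucc]
  have hsgn : (-1 : R') ^ ((n+1) + (v : ℕ)) * (-1 : R') ^ ((v : ℕ) + n) = -1 := by
    rw [← pow_add]
    exact Odd.neg_one_pow ⟨(v : ℕ) + n, by ring⟩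
  linear_combination (b * c *
    (M.submatrix (Fin.castSucc ∘ v.succAbove) (Fin.castSucc ∘ v.succAbove)).det) * hsgn



noncomputable def triW (m : ℕ) (a b : ℕ → Polynomial ℂ) :
    Matrix (Fin m) (Fin m) (Polynomial ℂ) :=
  Matrix.of fun i j =>
    if (i : ℕ) = (j : ℕ) then X
    else if (i : ℕ) + 1 = (j : ℕ) then a (i : ℕ)
    else if (j : ℕ) + 1 = (i : ℕ) then b (j : ℕ) else 0

lemma tri_det (a b : ℕ → Polynomial ℂ) (h : ∀ i, a i * b i = 1) :
    ∀ m, (triW m a b).det = q m := by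
  intro m
  induction m using Nat.twoStepInduction with
  | zero => simp [q_zero, Matrix.det_fin_zero]
  | one => simp [Matrix.det_fin_one, triW, q_one]
  | more m ih _ih1 =>
    rw [det_pendant (triW (m+2) a b) (Fin.last m) (b (m : ℕ)) (a (m : ℕ)) X ?_ ?_ ?_]
    · have e1 : (triW (m+2) a b).submatrix Fin.castSucc Fin.castSucc = triW (m+1) a b := by
        ext i j; simp [triW, Matrix.submatrix_apply]
      have e2 : (triW (m+2) a b).submatrix (Fin.castSucc ∘ (Fin.last m).succAbove)
          (Fin.castSucc ∘ (Fin.last m).succAbove) = triW m a b := by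
        ext i j
        simp [triW, Matrix.submatrix_apply, Fin.succAbove_last]
      rw [e1, e2, _ih1, ih, q_succ_succ]
      have := h m
      linear_combination (- q m) * this
    · intro j
      rcases j with ⟨j, hj⟩
      have hv : ((⟨j, hj⟩ : Fin (m+1)) = Fin.last m) ↔ j = m := by simp [Fin.ext_iff]
      simp only [hv, triW, Matrix.of_apply, Fin.coe_castSucc, Fin.val_last]
      split_ifs <;> first | rfl | omega | (congr 1 <;> omega)
    · intro j
      rcases j with ⟨j, hj⟩
      have hv : ((⟨j, hj⟩ : Fin (m+1)) = Fin.last m) ↔ j = m := by simp [Fin.ext_iff]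
      simp only [hv, triW, Matrix.of_apply, Fin.coe_castSucc, Fin.val_last]
      split_ifs <;> first | rfl | omega | (congr 1 <;> omega)
    · simp [triW]

lemma pPoly_eq_q (m : ℕ) : pPoly m = q m := by
  have e : Matrix.charmatrix (pathAdj m) = triW m (fun _ => -1) (fun _ => -1) := by
    ext i j
    by_cases hij : i = j
    · subst hij
      rw [Matrix.charmatrix_apply_eq]
      simp [pathAdj, triW]
    · rw [Matrix.charmatrix_apply_ne _ _ _ hij]
      have hij' : (i : ℕ) ≠ (j : ℕ) := fun h' => hij (Fin.ext h')
      simp only [pathAdj, triW, Matrix.of_apply, if_neg hij']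
      split_ifs <;> simp_all <;> omega
  rw [pPoly, Matrix.charpoly, e, tri_det _ _ (fun i => by ring)]

noncomputable def cE (N : ℕ) (x y : ℕ) : Polynomial ℂ :=
  if x = y then X
  else if x + 1 = y then -1
  else if y + 1 = x then -1
  else if x = 0 ∧ y = N - 1 then C Complex.I
  else if x = N - 1 ∧ y = 0 then -(C Complex.I)
  else 0

noncomputable def cyM (N : ℕ) : Matrix (Fin N) (Fin N) (Polynomial ℂ) :=
  Matrix.of fun i j => cE N (i : ℕ) (j : ℕ)

lemma CI_mul_CI : (C Complex.I : Polynomial ℂ) * C Complex.I = -1 := by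
  rw [← C_mul, Complex.I_mul_I, map_neg, Polynomial.C_1]

set_option maxHeartbeats 1000000 in
lemma cyc_det (n : ℕ) (hn : 1 ≤ n) :
    (cyM (n+2)).det = X * q (n+1) - 2 * q n := by
  have hone : ((1 : Fin (n+2)) : ℕ) = 1 := rfl
  have m0 : (cyM (n+2)).submatrix Fin.succ ((0 : Fin (n+2)).succAbove)
      = triW (n+1) (fun _ => -1) (fun _ => -1) := by
    ext i j : 2
    have hi' := i.isLt; have hj' := j.isLt
    simp only [Matrix.submatrix_apply, Fin.zero_succAbove, cyM, Matrix.of_apply, Fin.val_succ,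
      triW, cE]
    split_ifs <;> first | rfl | omega | simp_all
  have hN₁det : ((cyM (n+2)).submatrix Fin.succ (Fin.succAbove 1)).det
      = -(q n) - C Complex.I := by
    set N₁ := (cyM (n+2)).submatrix Fin.succ (Fin.succAbove (1 : Fin (n+2))) with hN₁
    rw [Matrix.det_succ_column_zero N₁]
    rw [sum_two _ 0 (Fin.last n) (by simp [Fin.ext_iff]; omega)
      (fun i hi0 hil => by
        simp only [ne_eq, Fin.ext_iff, Fin.val_zero, Fin.val_last] at hi0 hil
        have hi' := i.isLt
        have : N₁ i 0 = 0 := by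
          simp only [hN₁, Matrix.submatrix_apply, cyM, Matrix.of_apply, Fin.val_succ,
            coe_succAbove, hone, Fin.val_zero, cE]
          split_ifs <;> first | rfl | omega | simp_all
        rw [this]; ring)]
    have e1 : N₁ 0 0 = -1 := by
      simp only [hN₁, Matrix.submatrix_apply, cyM, Matrix.of_apply, Fin.val_succ,
        coe_succAbove, hone, Fin.val_zero, cE]
      split_ifs <;> first | rfl | omega | simp_all
    have e2 : N₁ (Fin.last n) 0 = -(C Complex.I) := by
      simp only [hN₁, Matrix.submatrix_apply, cyM, Matrix.of_apply, Fin.val_succ,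
        coe_succAbove, hone, Fin.val_zero, Fin.val_last, cE]
      split_ifs <;> first | rfl | omega | simp_all
    have m1 : (N₁.submatrix ((0 : Fin (n+1)).succAbove) Fin.succ)
        = triW n (fun _ => -1) (fun _ => -1) := by
      ext i j : 2
      have hi' := i.isLt; have hj' := j.isLt
      simp only [hN₁, Matrix.submatrix_apply, Fin.zero_succAbove, cyM, Matrix.of_apply,
        Fin.val_succ, coe_succAbove, hone, triW, cE]
      split_ifs <;> first | rfl | omega | simp_all
    have m2det : (N₁.submatrix ((Fin.last n).succAbove) Fin.succ).det = (-1)^n := by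
      have htr : ((N₁.submatrix ((Fin.last n).succAbove) Fin.succ)).BlockTriangular
          OrderDual.toDual := by
        intro i j hij
        have hij' : (i : ℕ) < (j : ℕ) := hij
        have hi' := i.isLt; have hj' := j.isLt
        simp only [hN₁, Matrix.submatrix_apply, Fin.succAbove_last, cyM, Matrix.of_apply,
          Fin.coe_castSucc, Fin.val_succ, coe_succAbove, hone, cE]
        split_ifs <;> first | rfl | omega | simp_all
      rw [Matrix.det_of_lowerTriangular _ htr]
      have hdg : ∀ i : Fin n, (N₁.submatrix ((Fin.last n).succAbove) Fin.succ) i i = -1 := by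
        intro i
        have hi' := i.isLt
        simp only [hN₁, Matrix.submatrix_apply, Fin.succAbove_last, cyM, Matrix.of_apply,
          Fin.coe_castSucc, Fin.val_succ, coe_succAbove, hone, cE]
        split_ifs <;> first | rfl | omega | simp_all
      rw [Finset.prod_congr rfl (fun i _ => hdg i)]
      simp [Finset.card_univ]
    rw [e1, e2, m1, m2det, tri_det _ _ (fun i => by ring) n]
    simp only [Fin.val_zero, Fin.val_last, pow_zero]
    have hsq : ((-1 : Polynomial ℂ))^n * (-1)^n = 1 := by
      rw [← pow_add]; exact Even.neg_one_pow ⟨n, by ring⟩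
    linear_combination (-(C Complex.I)) * hsq
  have hN₂det : ((cyM (n+2)).submatrix Fin.succ (Fin.succAbove (Fin.last (n+1)))).det
      = -((-1)^n) - (-1)^n * C Complex.I * q n := by
    set N₂ := (cyM (n+2)).submatrix Fin.succ (Fin.succAbove (Fin.last (n+1))) with hN₂
    rw [Matrix.det_succ_column_zero N₂]
    rw [sum_two _ 0 (Fin.last n) (by simp [Fin.ext_iff]; omega)
      (fun i hi0 hil => by
        simp only [ne_eq, Fin.ext_iff, Fin.val_zero, Fin.val_last] at hi0 hil
        have hi' := i.isLt
        have : N₂ i 0 = 0 := by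
          simp only [hN₂, Matrix.submatrix_apply, cyM, Matrix.of_apply, Fin.val_succ,
            Fin.succAbove_last, Fin.coe_castSucc, Fin.val_zero, cE]
          split_ifs <;> first | rfl | omega | simp_all
        rw [this]; ring)]
    have e1 : N₂ 0 0 = -1 := by
      simp only [hN₂, Matrix.submatrix_apply, cyM, Matrix.of_apply, Fin.val_succ,
        Fin.succAbove_last, Fin.coe_castSucc, Fin.val_zero, cE]
      split_ifs <;> first | rfl | omega | simp_all
    have e2 : N₂ (Fin.last n) 0 = -(C Complex.I) := by
      simp only [hN₂, Matrix.submatrix_apply, cyM, Matrix.of_apply, Fin.val_succ,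
        Fin.succAbove_last, Fin.coe_castSucc, Fin.val_zero, Fin.val_last, cE]
      split_ifs <;> first | rfl | omega | simp_all
    have m2det : (N₂.submatrix ((0 : Fin (n+1)).succAbove) Fin.succ).det = (-1)^n := by
      have htr : ((N₂.submatrix ((0 : Fin (n+1)).succAbove) Fin.succ)).BlockTriangular id := by
        intro i j hij
        have hij' : (j : ℕ) < (i : ℕ) := hij
        have hi' := i.isLt; have hj' := j.isLt
        simp only [hN₂, Matrix.submatrix_apply, Fin.zero_succAbove, Fin.succAbove_last, cyM,
          Matrix.of_apply, Fin.coe_castSucc, Fin.val_succ, cE]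
        split_ifs <;> first | rfl | omega | simp_all
      rw [Matrix.det_of_upperTriangular htr]
      have hdg : ∀ i : Fin n, (N₂.submatrix ((0 : Fin (n+1)).succAbove) Fin.succ) i i = -1 := by
        intro i
        have hi' := i.isLt
        simp only [hN₂, Matrix.submatrix_apply, Fin.zero_succAbove, Fin.succAbove_last, cyM,
          Matrix.of_apply, Fin.coe_castSucc, Fin.val_succ, cE]
        split_ifs <;> first | rfl | omega | simp_all
      rw [Finset.prod_congr rfl (fun i _ => hdg i)]
      simp [Finset.card_univ]
    have m1 : (N₂.submatrix ((Fin.last n).succAbove) Fin.succ)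
        = triW n (fun _ => -1) (fun _ => -1) := by
      ext i j : 2
      have hi' := i.isLt; have hj' := j.isLt
      simp only [hN₂, Matrix.submatrix_apply, Fin.succAbove_last, cyM, Matrix.of_apply,
        Fin.coe_castSucc, Fin.val_succ, triW, cE]
      split_ifs <;> first | rfl | omega | simp_all
    rw [e1, e2, m1, m2det, tri_det _ _ (fun i => by ring) n]
    simp only [Fin.val_zero, Fin.val_last, pow_zero]
    ring
  rw [Matrix.det_succ_row_zero (cyM (n+2))]
  rw [sum_three _ 0 1 (Fin.last (n+1)) (by simp [Fin.ext_iff])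
    (by simp [Fin.ext_iff]; try omega) (by simp [Fin.ext_iff, hone]; try omega)
    (fun j hj0 hj1 hjl => by
      simp only [ne_eq, Fin.ext_iff, Fin.val_zero, Fin.val_last, hone] at hj0 hj1 hjl
      have hj' := j.isLt
      have : cyM (n+2) 0 j = 0 := by
        simp only [cyM, Matrix.of_apply, Fin.val_zero, cE]
        split_ifs <;> first | rfl | omega | simp_all
      rw [this]; ring)]
  have e0 : cyM (n+2) 0 0 = X := by
    simp only [cyM, Matrix.of_apply, Fin.val_zero, cE]
    split_ifs <;> first | rfl | omega | simp_all
  have e1 : cyM (n+2) 0 1 = -1 := by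
    simp only [cyM, Matrix.of_apply, Fin.val_zero, hone, cE]
    split_ifs <;> first | rfl | omega | simp_all
  have e2 : cyM (n+2) 0 (Fin.last (n+1)) = C Complex.I := by
    simp only [cyM, Matrix.of_apply, Fin.val_zero, Fin.val_last, cE]
    split_ifs <;> first | rfl | omega | simp_all
  rw [e0, e1, e2, m0, hN₁det, hN₂det, tri_det _ _ (fun i => by ring) (n+1)]
  simp only [Fin.val_zero, Fin.val_last, hone, pow_zero, pow_one]
  have hsq : ((-1 : Polynomial ℂ))^n * (-1)^n = 1 := by
    rw [← pow_add]; exact Even.neg_one_pow ⟨n, by ring⟩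
  have hCI : (C Complex.I : Polynomial ℂ) * C Complex.I = -1 := CI_mul_CI
  rw [pow_succ]
  linear_combination (C Complex.I + q n * (C Complex.I * C Complex.I)) * hsq + q n * hCI

noncomputable def aE (k : ℕ) (x y : ℕ) : Polynomial ℂ :=
  if x = y then X
  else if (x+1 = y ∧ y ≤ k-1) ∨ (y+1 = x ∧ x ≤ k-1) then -1
  else if x = 0 ∧ y = k-1 then C Complex.I
  else if x = k-1 ∧ y = 0 then -(C Complex.I)
  else if (x = 0 ∧ y = k) ∨ (y = 0 ∧ x = k) then -1 else 0

noncomputable def dE (k t x y : ℕ) : Polynomial ℂ :=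
  if (x = t ∧ y = k+1) ∨ (y = t ∧ x = k+1) then -1 else aE k x y

noncomputable def eE (k t x y : ℕ) : ℂ :=
  if x+1 = y ∧ y ≤ k-1 then 1
  else if y+1 = x ∧ x ≤ k-1 then 1
  else if x = k-1 ∧ y = 0 then Complex.I
  else if y = k-1 ∧ x = 0 then -Complex.I
  else if (x = 0 ∧ y = k) ∨ (y = 0 ∧ x = k) then 1
  else if (x = t ∧ y = k+1) ∨ (y = t ∧ x = k+1) then 1 else 0

noncomputable def AM (k : ℕ) : Matrix (Fin (k+1)) (Fin (k+1)) (Polynomial ℂ) :=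
  Matrix.of fun i j => aE k (i : ℕ) (j : ℕ)

noncomputable def DM (k t : ℕ) : Matrix (Fin (k+2)) (Fin (k+2)) (Polynomial ℂ) :=
  Matrix.of fun i j => dE k t (i : ℕ) (j : ℕ)

noncomputable def BM (k t : ℕ) : Matrix (Fin k) (Fin k) (Polynomial ℂ) :=
  Matrix.of fun i j =>
    aE k (if (i : ℕ) < t then (i : ℕ) else (i : ℕ)+1) (if (j : ℕ) < t then (j : ℕ) else (j : ℕ)+1)

lemma Dkt_apply (k t : ℕ) (hk : 3 ≤ k) (ht1 : 1 ≤ t) (ht2 : t ≤ k-1) (i j : Fin (k+2)) :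
    Dkt k t i j = eE k t (i : ℕ) (j : ℕ) := by
  rcases i with ⟨x, hx⟩; rcases j with ⟨y, hy⟩
  simp only [Dkt, mkHerm, Matrix.of_apply, eE]
  split_ifs <;>
    first
      | omega
      | simp [Complex.ext_iff]
      | (exfalso; omega)

lemma charD (k t : ℕ) (hk : 3 ≤ k) (ht1 : 1 ≤ t) (ht2 : t ≤ k-1) :
    Matrix.charmatrix (Dkt k t) = DM k t := by
  ext i j : 2
  by_cases hij : i = j
  · subst hij
    rw [Matrix.charmatrix_apply_eq, Dkt_apply k t hk ht1 ht2]
    have h1 : eE k t (i : ℕ) (i : ℕ) = 0 := by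
      unfold eE; split_ifs <;> first | rfl | omega
    have h2 : dE k t (i : ℕ) (i : ℕ) = X := by
      unfold dE aE; split_ifs <;> first | rfl | omega
    simp only [DM, Matrix.of_apply, h1, h2, map_zero, sub_zero]
  · rw [Matrix.charmatrix_apply_ne _ _ _ hij, Dkt_apply k t hk ht1 ht2]
    have hne : (i : ℕ) ≠ (j : ℕ) := fun h => hij (Fin.ext h)
    simp only [DM, Matrix.of_apply]
    unfold eE dE aE
    split_ifs <;> first | omega | simp | (exfalso; omega)

lemma dE_eq_aE (k t x y : ℕ) (ht2 : t ≤ k-1) (hk : 1 ≤ k) (hx : x ≤ k) (hy : y ≤ k) :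
    dE k t x y = aE k x y := by
  unfold dE; rw [if_neg (by omega)]

set_option maxHeartbeats 1000000 in
lemma AM_det (n : ℕ) (hn : 1 ≤ n) :
    (AM (n+2)).det = X * (X * q (n+1) - 2 * q n) - q (n+1) := by
  rw [det_pendant (AM (n+2)) (0 : Fin (n+2)) (-1) (-1) X ?_ ?_ ?_]
  · have m1 : (AM (n+2)).submatrix Fin.castSucc Fin.castSucc = cyM (n+2) := by
      ext i j : 2
      have hi' := i.isLt; have hj' := j.isLt
      simp only [Matrix.submatrix_apply, AM, cyM, Matrix.of_apply, Fin.coe_castSucc, aE, cE]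
      split_ifs <;> first | rfl | omega | simp_all | (simp_all; omega)
    have m2 : (AM (n+2)).submatrix (Fin.castSucc ∘ (0 : Fin (n+2)).succAbove)
        (Fin.castSucc ∘ (0 : Fin (n+2)).succAbove) = triW (n+1) (fun _ => -1) (fun _ => -1) := by
      ext i j : 2
      have hi' := i.isLt; have hj' := j.isLt
      simp only [Matrix.submatrix_apply, Function.comp_apply, Fin.zero_succAbove, AM,
        Matrix.of_apply, Fin.coe_castSucc, Fin.val_succ, triW, aE]
      split_ifs <;> first | rfl | omega | simp_all | (simp_all; omega)
    rw [m1, m2, cyc_det n hn, tri_det _ _ (fun i => by ring) (n+1)]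
    ring
  · intro j
    rcases j with ⟨y, hy⟩
    have hv : ((⟨y, hy⟩ : Fin (n+2)) = 0) ↔ y = 0 := by simp [Fin.ext_iff]
    simp only [hv, AM, Matrix.of_apply, Fin.val_last, Fin.coe_castSucc, aE]
    split_ifs <;> first | rfl | omega | simp_all | (simp_all; omega)
  · intro j
    rcases j with ⟨y, hy⟩
    have hv : ((⟨y, hy⟩ : Fin (n+2)) = 0) ↔ y = 0 := by simp [Fin.ext_iff]
    simp only [hv, AM, Matrix.of_apply, Fin.val_last, Fin.coe_castSucc, aE]
    split_ifs <;> first | rfl | omega | simp_all | (simp_all; omega)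
  · simp only [AM, Matrix.of_apply, Fin.val_last, aE]
    split_ifs <;> first | rfl | omega | simp_all | (simp_all; omega)

def pe (s w : ℕ) (i : Fin (s+w+1)) : Fin (s+w+1) :=
  ⟨if (i : ℕ) < s+1 then s - (i : ℕ) else (s+1) + (s+w - (i : ℕ)), by
    have := i.isLt; split_ifs <;> omega⟩

lemma pe_invol (s w : ℕ) : Function.Involutive (pe s w) := by
  intro i
  have := i.isLt
  apply Fin.ext
  simp only [pe]
  split_ifs <;> omega

set_option maxHeartbeats 4000000 in
lemma BM_det (s w : ℕ) (h1 : 1 ≤ s + w) :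
    (BM (s+w+2) (s+1)).det = X * q (s+w+1) - q s * q w := by
  rw [det_pendant (BM (s+w+2) (s+1)) (0 : Fin (s+w+1)) (-1) (-1) X ?_ ?_ ?_]
  · have hB1 : (BM (s+w+2) (s+1)).submatrix Fin.castSucc Fin.castSucc
        = (triW (s+w+1) (fun x => if x = s then C Complex.I else -1)
            (fun x => if x = s then -(C Complex.I) else -1)).submatrix (pe s w) (pe s w) := by
      ext i j : 2
      have hi' := i.isLt; have hj' := j.isLt
      simp only [Matrix.submatrix_apply, BM, Matrix.of_apply, Fin.coe_castSucc, triW, pe, aE]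
      split_ifs <;> first | rfl | omega | simp_all | (simp_all; omega)
    have hB1det : ((BM (s+w+2) (s+1)).submatrix Fin.castSucc Fin.castSucc).det = q (s+w+1) := by
      rw [hB1]
      have hpe : (pe s w) = ⇑(Function.Involutive.toPerm _ (pe_invol s w)) := rfl
      rw [hpe, Matrix.det_submatrix_equiv_self]
      refine tri_det _ _ (fun i => ?_) (s+w+1)
      by_cases hi : i = s
      · simp only [hi, eq_self_iff_true, ite_true]
        rw [mul_neg, CI_mul_CI, neg_neg]
      · simp only [if_neg hi]
        norm_num
    have hB2det : ((BM (s+w+2) (s+1)).submatrix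
        (Fin.castSucc ∘ (0 : Fin (s+w+1)).succAbove)
        (Fin.castSucc ∘ (0 : Fin (s+w+1)).succAbove)).det = q s * q w := by
      rw [← Matrix.det_submatrix_equiv_self finSumFinEquiv]
      have hfb : (((BM (s+w+2) (s+1)).submatrix
          (Fin.castSucc ∘ (0 : Fin (s+w+1)).succAbove)
          (Fin.castSucc ∘ (0 : Fin (s+w+1)).succAbove)).submatrix finSumFinEquiv finSumFinEquiv)
          = Matrix.fromBlocks (triW s (fun _ => -1) (fun _ => -1)) 0 0
              (triW w (fun _ => -1) (fun _ => -1)) := by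
        ext a b : 2
        rcases a with i | i <;> rcases b with j | j <;>
          (have hi' := i.isLt; have hj' := j.isLt;
           simp only [Matrix.submatrix_apply, Function.comp_apply, Fin.zero_succAbove, BM,
             Matrix.of_apply, Fin.coe_castSucc, Fin.val_succ, finSumFinEquiv_apply_left,
             finSumFinEquiv_apply_right, Fin.coe_castAdd, Fin.coe_natAdd,
             Matrix.fromBlocks_apply₁₁, Matrix.fromBlocks_apply₁₂, Matrix.fromBlocks_apply₂₁,
             Matrix.fromBlocks_apply₂₂, Matrix.zero_apply, triW, aE];
           split_ifs <;> first | rfl | omega | simp_all | (simp_all; omega))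
      rw [hfb, Matrix.det_fromBlocks_zero₂₁, tri_det _ _ (fun i => by ring) s,
        tri_det _ _ (fun i => by ring) w]
    rw [hB1det, hB2det]
    ring
  · intro j
    rcases j with ⟨y, hy⟩
    have hv : ((⟨y, hy⟩ : Fin (s+w+1)) = 0) ↔ y = 0 := by simp [Fin.ext_iff]
    simp only [hv, BM, Matrix.of_apply, Fin.val_last, Fin.coe_castSucc, aE]
    split_ifs <;> first | rfl | omega | simp_all | (simp_all; omega)
  · intro j
    rcases j with ⟨y, hy⟩
    have hv : ((⟨y, hy⟩ : Fin (s+w+1)) = 0) ↔ y = 0 := by simp [Fin.ext_iff]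
    simp only [hv, BM, Matrix.of_apply, Fin.val_last, Fin.coe_castSucc, aE]
    split_ifs <;> first | rfl | omega | simp_all | (simp_all; omega)
  · simp only [BM, Matrix.of_apply, Fin.val_last, aE]
    split_ifs <;> first | rfl | omega | simp_all | (simp_all; omega)

end S10

set_option maxHeartbeats 2000000 in
/-- charpoly identity for `D_{k,t}`. -/
theorem stmt10 (k t : ℕ) (hk : 3 ≤ k) (ht1 : 1 ≤ t) (ht2 : t ≤ k - 1) :
    (Dkt k t).charpoly
      = X * (X ^ 2 - 2) * pPoly (k - 1) - 2 * X ^ 2 * pPoly (k - 2)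
        + pPoly (t - 1) * pPoly (k - 1 - t) := by
  obtain ⟨s, rfl⟩ : ∃ s, t = s + 1 := ⟨t - 1, by omega⟩
  obtain ⟨w, rfl⟩ : ∃ w, k = s + w + 2 := ⟨k - s - 2, by omega⟩
  have h1 : 1 ≤ s + w := by omega
  have hchar : (Dkt (s+w+2) (s+1)).charpoly = (S10.DM (s+w+2) (s+1)).det := by
    rw [Matrix.charpoly, S10.charD _ _ hk ht1 ht2]
  rw [hchar]
  rw [S10.det_pendant (S10.DM (s+w+2) (s+1)) (⟨s+1, by omega⟩ : Fin (s+w+3)) (-1) (-1) X ?_ ?_ ?_]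
  · have m1 : (S10.DM (s+w+2) (s+1)).submatrix Fin.castSucc Fin.castSucc
        = S10.AM (s+w+2) := by
      ext i j : 2
      have hi' := i.isLt; have hj' := j.isLt
      simp only [Matrix.submatrix_apply, S10.DM, S10.AM, Matrix.of_apply, Fin.coe_castSucc]
      rw [S10.dE_eq_aE _ _ _ _ (by omega) (by omega) (by omega) (by omega)]
    have m2 : (S10.DM (s+w+2) (s+1)).submatrix
        (Fin.castSucc ∘ (⟨s+1, by omega⟩ : Fin (s+w+3)).succAbove)
        (Fin.castSucc ∘ (⟨s+1, by omega⟩ : Fin (s+w+3)).succAbove)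
        = S10.BM (s+w+2) (s+1) := by
      ext i j : 2
      have hi' := i.isLt; have hj' := j.isLt
      simp only [Matrix.submatrix_apply, Function.comp_apply, S10.DM, S10.BM, Matrix.of_apply,
        Fin.coe_castSucc, S10.coe_succAbove]
      rw [S10.dE_eq_aE _ _ _ _ (by omega) (by omega) (by split_ifs <;> omega)
        (by split_ifs <;> omega)]
    rw [m1, m2, S10.AM_det _ h1, S10.BM_det _ _ h1]
    have e4 : s + w + 2 - 1 - (s + 1) = w := by omega
    have e3 : s + 1 - 1 = s := by omega
    have e2 : s + w + 2 - 2 = s + w := by omega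
    have e1 : s + w + 2 - 1 = s + w + 1 := by omega
    rw [e4, e3, e2, e1, S10.pPoly_eq_q, S10.pPoly_eq_q, S10.pPoly_eq_q, S10.pPoly_eq_q]
    ring
  · intro j
    rcases j with ⟨y, hy⟩
    have hv : ((⟨y, hy⟩ : Fin (s+w+3)) = ⟨s+1, by omega⟩) ↔ y = s+1 := by simp [Fin.ext_iff]
    simp only [hv, S10.DM, Matrix.of_apply, Fin.val_last, Fin.coe_castSucc, S10.dE, S10.aE]
    split_ifs <;> first | rfl | omega | simp_all | (simp_all; omega)
  · intro j
    rcases j with ⟨y, hy⟩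
    have hv : ((⟨y, hy⟩ : Fin (s+w+3)) = ⟨s+1, by omega⟩) ↔ y = s+1 := by simp [Fin.ext_iff]
    simp only [hv, S10.DM, Matrix.of_apply, Fin.val_last, Fin.coe_castSucc, S10.dE, S10.aE]
    split_ifs <;> first | rfl | omega | simp_all | (simp_all; omega)
  · simp only [S10.DM, Matrix.of_apply, Fin.val_last, S10.dE, S10.aE]
    split_ifs <;> first | rfl | omega | simp_all | (simp_all; omega)
end

section
/- For every k ≥ 5, the spectral radius of the mixed graph C'_{k,k+2} is strictly greater than Real.sqrt (2 + Real.sqrt 5). -/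
open Polynomial Filter

section Stmt13Aux

open Matrix Complex

private lemma rayleigh_lt_specRad {n : Type*} [Fintype n] [DecidableEq n]
    {A : Matrix n n ℂ} (hA : A.IsHermitian) (x : n → ℂ) (c : ℝ)
    (h : c * (star x ⬝ᵥ x).re < (star x ⬝ᵥ (A *ᵥ x)).re) : c < specRad A := by
  classical
  set V : Matrix n n ℂ := (hA.eigenvectorUnitary : Matrix n n ℂ) with hV
  set y : n → ℂ := star V *ᵥ x with hy
  have hyx : star y = star x ᵥ* V := by
    rw [hy, star_mulVec]
    simp [Matrix.star_eq_conjTranspose]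
  have hden : star x ⬝ᵥ x = star y ⬝ᵥ y := by
    rw [hyx, hy, ← dotProduct_mulVec, mulVec_mulVec,
      Matrix.mem_unitaryGroup_iff.mp hA.eigenvectorUnitary.2, one_mulVec]
  have hco : ∀ r : ℝ, (RCLike.ofReal r : ℂ) = (r : ℂ) := fun r => rfl
  have hnum : star x ⬝ᵥ (A *ᵥ x) = ∑ i, ((hA.eigenvalues i : ℂ) * (star y i * y i)) := by
    conv_lhs => rw [hA.spectral_theorem, Unitary.conjStarAlgAut_apply]
    rw [← Matrix.mulVec_mulVec, ← Matrix.mulVec_mulVec, dotProduct_mulVec, ← hyx]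
    simp only [dotProduct, mulVec_diagonal, Function.comp_apply, ← hy, hco]
    refine Finset.sum_congr rfl fun i _ => ?_
    ring
  have hsq : ∀ i, star y i * y i = (Complex.normSq (y i) : ℂ) := fun i => by
    simp only [Pi.star_apply, Complex.star_def]
    rw [← Complex.normSq_eq_conj_mul_self]
  have hre : (star x ⬝ᵥ (A *ᵥ x)).re = ∑ i, hA.eigenvalues i * Complex.normSq (y i) := by
    rw [hnum]
    rw [Complex.re_sum]
    refine Finset.sum_congr rfl fun i _ => ?_
    rw [hsq i]
    rw [← Complex.ofReal_mul]
    exact Complex.ofReal_re _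
  have hre2 : (star x ⬝ᵥ x).re = ∑ i, Complex.normSq (y i) := by
    rw [hden]
    simp only [dotProduct, hsq]
    rw [Complex.re_sum]
    simp
  have hex : ∃ i, c < hA.eigenvalues i := by
    by_contra hcon
    push_neg at hcon
    rw [hre, hre2] at h
    have : ∑ i, hA.eigenvalues i * Complex.normSq (y i) ≤
        ∑ i, c * Complex.normSq (y i) := by
      refine Finset.sum_le_sum fun i _ => ?_
      exact mul_le_mul_of_nonneg_right (hcon i) (Complex.normSq_nonneg _)
    rw [← Finset.mul_sum] at this
    linarith
  obtain ⟨i, hi⟩ := hex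
  have hmem : (hA.eigenvalues i : ℂ) ∈ spectrum ℂ A := by
    have h1 : hA.eigenvalues i ∈ spectrum ℝ A := hA.eigenvalues_mem_spectrum_real i
    have := spectrum.algebraMap_mem ℂ h1
    rwa [Complex.coe_algebraMap] at this
  have hle : ‖((hA.eigenvalues i : ℂ))‖ ≤ specRad A := by
    refine le_csSup ?_ ⟨_, hmem, rfl⟩
    exact Set.Finite.bddAbove ((A.finite_spectrum).image _)
  calc c < hA.eigenvalues i := hi
    _ ≤ |hA.eigenvalues i| := le_abs_self _
    _ = ‖((hA.eigenvalues i : ℂ))‖ := by rw [Complex.norm_real, Real.norm_eq_abs]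
    _ ≤ specRad A := hle

private lemma mkHerm_isHermitian (n : ℕ) (g : ℕ → ℕ → ℂ) : (mkHerm n g).IsHermitian := by
  ext i j
  simp [mkHerm, Matrix.conjTranspose_apply, add_comm]

private noncomputable def padVec {m N : Type*} [Fintype m] [DecidableEq N]
    (f : m → N) (y : m → ℂ) : N → ℂ :=
  fun i => ∑ j, if i = f j then y j else 0

private lemma padVec_dot {m N : Type*} [Fintype m] [Fintype N] [DecidableEq N]
    (f : m → N) (y : m → ℂ) (g : N → ℂ) :
    padVec f y ⬝ᵥ g = ∑ j, y j * g (f j) := by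
  unfold dotProduct padVec
  simp only [Finset.sum_mul]
  rw [Finset.sum_comm]
  refine Finset.sum_congr rfl fun j _ => ?_
  simp [ite_mul]

private lemma padVec_star {m N : Type*} [Fintype m] [DecidableEq N] (f : m → N) (y : m → ℂ) :
    star (padVec f y) = padVec f (star y) := by
  funext i
  simp [padVec, apply_ite (starRingEnd ℂ)]

private lemma padVec_apply {m N : Type*} [Fintype m] [DecidableEq m] [DecidableEq N]
    {f : m → N} (hf : Function.Injective f) (y : m → ℂ) (j : m) :
    padVec f y (f j) = y j := by
  simp [padVec, hf.eq_iff]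

private lemma padVec_quad {m N : Type*} [Fintype m] [DecidableEq m] [Fintype N] [DecidableEq N]
    (f : m → N) (y : m → ℂ) (H : Matrix N N ℂ) :
    star (padVec f y) ⬝ᵥ (H *ᵥ padVec f y) = star y ⬝ᵥ ((H.submatrix f f) *ᵥ y) := by
  rw [padVec_star, padVec_dot]
  unfold dotProduct
  refine Finset.sum_congr rfl fun j _ => ?_
  have hj : (H *ᵥ padVec f y) (f j) = ∑ j', y j' * H (f j) (f j') := by
    show (fun i => H (f j) i) ⬝ᵥ padVec f y = _
    rw [dotProduct_comm, padVec_dot]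
  rw [hj]
  simp only [Matrix.mulVec, dotProduct, Pi.star_apply, submatrix_apply, Finset.mul_sum]
  exact Finset.sum_congr rfl fun j' _ => by ring

private lemma padVec_norm {m N : Type*} [Fintype m] [DecidableEq m] [Fintype N] [DecidableEq N]
    {f : m → N} (hf : Function.Injective f) (y : m → ℂ) :
    star (padVec f y) ⬝ᵥ padVec f y = star y ⬝ᵥ y := by
  rw [padVec_star, padVec_dot]
  refine Finset.sum_congr rfl fun j _ => ?_
  rw [padVec_apply hf]

private lemma sqrt_bound {Q N : ℝ} (hN : 0 < N) (hQ : 0 < Q) (h1 : 2*N^2 < Q^2)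
    (h2 : 5*N^4 < (Q^2 - 2*N^2)^2) : Real.sqrt (2 + Real.sqrt 5) * N < Q := by
  have hs5 : Real.sqrt 5 < (Q^2 - 2*N^2)/N^2 := by
    rw [Real.sqrt_lt' (div_pos (by linarith) (by positivity))]
    rw [div_pow, lt_div_iff₀ (by positivity)]
    nlinarith
  have h3 : 2 + Real.sqrt 5 < (Q/N)^2 := by
    rw [div_pow, lt_div_iff₀ (by positivity)]
    rw [lt_div_iff₀ (by positivity)] at hs5
    nlinarith
  have h4 : Real.sqrt (2 + Real.sqrt 5) < Q/N := by
    rw [Real.sqrt_lt' (by positivity)]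
    exact h3
  rw [← lt_div_iff₀ hN] at *
  exact h4

/-- The spider tree `T(4,4,2)` (with one `i`-edge, switching-trivial). -/
private noncomputable def spiderM : Matrix (Fin 11) (Fin 11) ℂ :=
  mkHerm 11 fun a b =>
    if (a = 0 ∧ b = 1) ∨ (a = 1 ∧ b = 2) ∨ (a = 2 ∧ b = 3) ∨ (a = 3 ∧ b = 4) ∨
       (a = 5 ∧ b = 6) ∨ (a = 6 ∧ b = 7) ∨ (a = 7 ∧ b = 8) ∨ (a = 0 ∧ b = 9) ∨
       (a = 9 ∧ b = 10) then 1
    else if a = 8 ∧ b = 0 then Complex.I else 0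

private noncomputable def ygen : Fin 11 → ℂ :=
  ![33, 27, 19, 11, 5, 5*I, 11*I, 19*I, 27*I, 19, 9]

set_option maxHeartbeats 1000000 in
private lemma ygen_quad : star ygen ⬝ᵥ (spiderM *ᵥ ygen) = 8268 := by
  simp only [dotProduct, Matrix.mulVec, mkHerm, spiderM, Matrix.of_apply,
    Fin.sum_univ_succ, Finset.sum_const, Pi.star_apply]
  simp only [ygen, Matrix.cons_val_succ, Matrix.cons_val_zero]
  norm_num [ygen, Complex.ext_iff]

set_option maxHeartbeats 1000000 in
private lemma ygen_norm : star ygen ⬝ᵥ ygen = 4003 := by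
  simp only [dotProduct, Fin.sum_univ_succ, Finset.sum_const, Pi.star_apply]
  simp only [ygen, Matrix.cons_val_succ, Matrix.cons_val_zero]
  norm_num [ygen, Complex.ext_iff]

private def fgen (m : ℕ) : Fin 11 → Fin (m + 10 + 2) :=
  fun j => ⟨if (j : ℕ) ≤ 4 then (j : ℕ) else m + 1 + (j : ℕ), by
    rcases j with ⟨v, hv⟩; dsimp; split <;> omega⟩

private lemma fgen_inj (m : ℕ) : Function.Injective (fgen m) := by
  intro a b hab
  have h := congrArg Fin.val hab
  simp only [fgen] at h
  have ha := a.isLt; have hb := b.isLt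
  apply Fin.ext
  split at h <;> split at h <;> omega

set_option maxHeartbeats 2000000 in
private lemma fgen_submatrix (m : ℕ) :
    (CpTail (m + 10)).submatrix (fgen m) (fgen m) = spiderM := by
  ext a b
  rcases a with ⟨a, halt⟩
  rcases b with ⟨b, hblt⟩
  simp only [submatrix_apply, CpTail, spiderM, mkHerm, Matrix.of_apply, fgen]
  interval_cases a <;> interval_cases b <;>
    norm_num <;>
    first
      | omega
      | (split_ifs <;> first | rfl | norm_num | (exfalso; omega))

private lemma stmt13_generic (m : ℕ) :
    Real.sqrt (2 + Real.sqrt 5) < specRad (CpTail (m + 10)) := by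
  have hH : (CpTail (m + 10)).IsHermitian := mkHerm_isHermitian _ _
  apply rayleigh_lt_specRad hH (padVec (fgen m) ygen)
  rw [padVec_quad (fgen m) ygen, padVec_norm (fgen_inj m) ygen, fgen_submatrix m,
    ygen_quad, ygen_norm]
  norm_num
  have := sqrt_bound (Q := 8268) (N := 4003) (by norm_num) (by norm_num)
    (by norm_num) (by norm_num)
  linarith

end Stmt13Aux

section Stmt13Case5
open Matrix Complex

private noncomputable def yc5 : Fin 7 → ℂ := ![55, 40+8*I, 28+17*I, 17+28*I, 8+40*I, 35, 17]

set_option maxHeartbeats 2000000 in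
private lemma stmt13_case5 : Real.sqrt (2 + Real.sqrt 5) < specRad (CpTail 5) := by
  have hH : (CpTail 5).IsHermitian := mkHerm_isHermitian _ _
  apply rayleigh_lt_specRad hH yc5
  have e1 : star yc5 ⬝ᵥ ((CpTail 5) *ᵥ yc5) = 20768 := by
    simp only [dotProduct, Matrix.mulVec, mkHerm, CpTail, Matrix.of_apply,
      Fin.sum_univ_succ, Finset.sum_const, Pi.star_apply]
    simp only [yc5, Matrix.cons_val_succ, Matrix.cons_val_zero]
    norm_num [yc5, Complex.ext_iff]
  have e2 : star yc5 ⬝ᵥ yc5 = 10013 := by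
    simp only [dotProduct, Fin.sum_univ_succ, Finset.sum_const, Pi.star_apply]
    simp only [yc5, Matrix.cons_val_succ, Matrix.cons_val_zero]
    norm_num [yc5, Complex.ext_iff]
  rw [e1, e2]
  norm_num
  have := sqrt_bound (Q := 20768) (N := 10013) (by norm_num) (by norm_num)
    (by norm_num) (by norm_num)
  linarith

end Stmt13Case5

section Stmt13Case6
open Matrix Complex

private noncomputable def yc6 : Fin 8 → ℂ := ![54, 39+6*I, 28+12*I, 19+19*I, 12+28*I, 6+39*I, 33, 16]

set_option maxHeartbeats 2000000 in
private lemma stmt13_case6 : Real.sqrt (2 + Real.sqrt 5) < specRad (CpTail 6) := by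
  have hH : (CpTail 6).IsHermitian := mkHerm_isHermitian _ _
  apply rayleigh_lt_specRad hH yc6
  have e1 : star yc6 ⬝ᵥ ((CpTail 6) *ᵥ yc6) = 20740 := by
    simp only [dotProduct, Matrix.mulVec, mkHerm, CpTail, Matrix.of_apply,
      Fin.sum_univ_succ, Finset.sum_const, Pi.star_apply]
    simp only [yc6, Matrix.cons_val_succ, Matrix.cons_val_zero]
    norm_num [yc6, Complex.ext_iff]
  have e2 : star yc6 ⬝ᵥ yc6 = 9953 := by
    simp only [dotProduct, Fin.sum_univ_succ, Finset.sum_const, Pi.star_apply]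
    simp only [yc6, Matrix.cons_val_succ, Matrix.cons_val_zero]
    norm_num [yc6, Complex.ext_iff]
  rw [e1, e2]
  norm_num
  have := sqrt_bound (Q := 20740) (N := 9953) (by norm_num) (by norm_num)
    (by norm_num) (by norm_num)
  linarith

end Stmt13Case6

section Stmt13Case7
open Matrix Complex

private noncomputable def yc7 : Fin 9 → ℂ := ![53, 39+4*I, 28+8*I, 20+14*I, 14+20*I, 8+28*I, 4+39*I, 33, 16]

set_option maxHeartbeats 2000000 in
private lemma stmt13_case7 : Real.sqrt (2 + Real.sqrt 5) < specRad (CpTail 7) := by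
  have hH : (CpTail 7).IsHermitian := mkHerm_isHermitian _ _
  apply rayleigh_lt_specRad hH yc7
  have e1 : star yc7 ⬝ᵥ ((CpTail 7) *ᵥ yc7) = 21126 := by
    simp only [dotProduct, Matrix.mulVec, mkHerm, CpTail, Matrix.of_apply,
      Fin.sum_univ_succ, Finset.sum_const, Pi.star_apply]
    simp only [yc7, Matrix.cons_val_succ, Matrix.cons_val_zero]
    norm_num [yc7, Complex.ext_iff]
  have e2 : star yc7 ⬝ᵥ yc7 = 10116 := by
    simp only [dotProduct, Fin.sum_univ_succ, Finset.sum_const, Pi.star_apply]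
    simp only [yc7, Matrix.cons_val_succ, Matrix.cons_val_zero]
    norm_num [yc7, Complex.ext_iff]
  rw [e1, e2]
  norm_num
  have := sqrt_bound (Q := 21126) (N := 10116) (by norm_num) (by norm_num)
    (by norm_num) (by norm_num)
  linarith

end Stmt13Case7

section Stmt13Case8
open Matrix Complex

private noncomputable def yc8 : Fin 10 → ℂ := ![52, 38+3*I, 28+6*I, 20+10*I, 14+14*I, 10+20*I, 6+28*I, 3+38*I, 32, 15]

set_option maxHeartbeats 2000000 in
private lemma stmt13_case8 : Real.sqrt (2 + Real.sqrt 5) < specRad (CpTail 8) := by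
  have hH : (CpTail 8).IsHermitian := mkHerm_isHermitian _ _
  apply rayleigh_lt_specRad hH yc8
  have e1 : star yc8 ⬝ᵥ ((CpTail 8) *ᵥ yc8) = 20680 := by
    simp only [dotProduct, Matrix.mulVec, mkHerm, CpTail, Matrix.of_apply,
      Fin.sum_univ_succ, Finset.sum_const, Pi.star_apply]
    simp only [yc8, Matrix.cons_val_succ, Matrix.cons_val_zero]
    norm_num [yc8, Complex.ext_iff]
  have e2 : star yc8 ⬝ᵥ yc8 = 9891 := by
    simp only [dotProduct, Fin.sum_univ_succ, Finset.sum_const, Pi.star_apply]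
    simp only [yc8, Matrix.cons_val_succ, Matrix.cons_val_zero]
    norm_num [yc8, Complex.ext_iff]
  rw [e1, e2]
  norm_num
  have := sqrt_bound (Q := 20680) (N := 9891) (by norm_num) (by norm_num)
    (by norm_num) (by norm_num)
  linarith

end Stmt13Case8

section Stmt13Case9
open Matrix Complex

private noncomputable def yc9 : Fin 11 → ℂ := ![52, 38+2*I, 28+4*I, 20+7*I, 15+10*I, 10+15*I, 7+20*I, 4+28*I, 2+38*I, 32, 15]

set_option maxHeartbeats 2000000 in
private lemma stmt13_case9 : Real.sqrt (2 + Real.sqrt 5) < specRad (CpTail 9) := by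
  have hH : (CpTail 9).IsHermitian := mkHerm_isHermitian _ _
  apply rayleigh_lt_specRad hH yc9
  have e1 : star yc9 ⬝ᵥ ((CpTail 9) *ᵥ yc9) = 20912 := by
    simp only [dotProduct, Matrix.mulVec, mkHerm, CpTail, Matrix.of_apply,
      Fin.sum_univ_succ, Finset.sum_const, Pi.star_apply]
    simp only [yc9, Matrix.cons_val_succ, Matrix.cons_val_zero]
    norm_num [yc9, Complex.ext_iff]
  have e2 : star yc9 ⬝ᵥ yc9 = 9997 := by
    simp only [dotProduct, Fin.sum_univ_succ, Finset.sum_const, Pi.star_apply]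
    simp only [yc9, Matrix.cons_val_succ, Matrix.cons_val_zero]
    norm_num [yc9, Complex.ext_iff]
  rw [e1, e2]
  norm_num
  have := sqrt_bound (Q := 20912) (N := 9997) (by norm_num) (by norm_num)
    (by norm_num) (by norm_num)
  linarith

end Stmt13Case9

/-- `ρ(C'_{k,k+2}) > √(2+√5)` for `k ≥ 5`. -/
theorem stmt13 (k : ℕ) (hk : 5 ≤ k) :
    Real.sqrt (2 + Real.sqrt 5) < specRad (CpTail k) := by
  by_cases h : k ≤ 9
  · interval_cases k
    · exact stmt13_case5
    · exact stmt13_case6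
    · exact stmt13_case7
    · exact stmt13_case8
    · exact stmt13_case9
  · push_neg at h
    obtain ⟨m, rfl⟩ : ∃ m, k = m + 10 := ⟨k - 10, by omega⟩
    exact stmt13_generic m
end
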